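/- arXiv:2407.02259 — 3 statements merged into one kernel-verified Lean document; each statement's English description precedes it below -/
import Mathlib

section
/- In the local coordinate model, set Ω₊ = {(t, x, τ, ξ) : x ∈ U, z > 0}, and let ϱ⁰ ∈ H_∂⁻ (respectively ϱ⁰ ∈ H_∂⁺) with x-component in U. Then there exist S₀ > 0 and an open neighbourhood V⁰ of ϱ⁰ contained in H_∂⁻ (respectively in H_∂⁺) such that for every maximal bicharacteristic γ : (s₁, s₂) → Ω₊ in Ω₊ with s₁ < s₂ for which the limit lim_{s→s₂⁻} γ(s) exists and belongs to V⁰ (respectively the limit lim_{s→s₁⁺} γ(s) exists and belongs to V⁰), one has s₂ − s₁ ≥ S₀. -/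
open MeasureTheory Filter Topology Set

noncomputable section

/-- Phase space `ℝ × ℝ^{d+1} × ℝ × ℝ^{d+1}`, points `ϱ = (t, x, τ, ξ)`. -/
abbrev Phase (d : ℕ) : Type := ℝ × (Fin (d + 1) → ℝ) × ℝ × (Fin (d + 1) → ℝ)

/-- Boundary phase space `ℝ × ℝ^d × ℝ × ℝ^d`, points `ϱ' = (t, x', τ, ξ')`. -/
abbrev BPhase (d : ℕ) : Type := ℝ × (Fin d → ℝ) × ℝ × (Fin d → ℝ)

variable {d : ℕ}

/-- The quadratic form `⟨A ξ, ξ⟩`. -/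
def qf (A : Fin (d + 1) → Fin (d + 1) → ℝ) (ξ : Fin (d + 1) → ℝ) : ℝ :=
  ∑ i, ∑ j, A i j * ξ i * ξ j

variable (a : (Fin (d + 1) → ℝ) → Fin (d + 1) → Fin (d + 1) → ℝ)

/-- The principal symbol `p(ϱ) = -τ² + ⟨a(x)ξ, ξ⟩`. -/
def psymb (ϱ : Phase d) : ℝ := -ϱ.2.2.1 ^ 2 + qf (a ϱ.2.1) ϱ.2.2.2

/-- The Hamiltonian vector field of `p`. -/
def Hp (ϱ : Phase d) : Phase d :=
  (-(2 * ϱ.2.2.1),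
    fun i => 2 * ∑ j, a ϱ.2.1 i j * ϱ.2.2.2 j,
    0,
    fun k => -(fderiv ℝ (fun y => qf (a y) ϱ.2.2.2) ϱ.2.1 (Pi.single k 1)))

/-- `H_p z (ϱ) = 2 (a(x) ξ)_d`. -/
def Hpz (ϱ : Phase d) : ℝ := 2 * ∑ j, a ϱ.2.1 (Fin.last d) j * ϱ.2.2.2 j

/-- `H_p² z (ϱ) = d(H_p z)(ϱ)[H_p(ϱ)]`. -/
def Hp2z (ϱ : Phase d) : ℝ := fderiv ℝ (Hpz a) ϱ (Hp a ϱ)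

/-- The `z`-component (last coordinate of `x`). -/
def zc (ϱ : Phase d) : ℝ := ϱ.2.1 (Fin.last d)

/-- The characteristic set `{p = 0}`. -/
def CharSet : Set (Phase d) := {ϱ | psymb a ϱ = 0}

/-- Hyperbolic set `H_∂⁺`. -/
def Hplus : Set (Phase d) := {ϱ | zc ϱ = 0 ∧ psymb a ϱ = 0 ∧ 0 < Hpz a ϱ}

/-- Hyperbolic set `H_∂⁻`. -/
def Hminus : Set (Phase d) := {ϱ | zc ϱ = 0 ∧ psymb a ϱ = 0 ∧ Hpz a ϱ < 0}

/-- Glancing set `G_∂`. -/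
def Gb : Set (Phase d) := {ϱ | zc ϱ = 0 ∧ psymb a ϱ = 0 ∧ Hpz a ϱ = 0}

/-- Diffractive set `G_∂^sd`. -/
def Gsd : Set (Phase d) := {ϱ | ϱ ∈ Gb a ∧ 0 < Hp2z a ϱ}

/-- Order-three glancing set `G_∂^gl`. -/
def Ggl : Set (Phase d) := {ϱ | ϱ ∈ Gb a ∧ Hp2z a ϱ = 0}

/-- Gliding set `G_∂^sg`. -/
def Gsg : Set (Phase d) := {ϱ | ϱ ∈ Gb a ∧ Hp2z a ϱ < 0}

/-- `a` is a C¹ symmetric positive definite (inverse) metric on `U`. -/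
def MetricHyp (U : Set (Fin (d + 1) → ℝ)) : Prop :=
  ContDiffOn ℝ 1 a U ∧ (∀ x ∈ U, ∀ i j, a x i j = a x j i) ∧
    ∀ x ∈ U, ∀ ξ : Fin (d + 1) → ℝ, ξ ≠ 0 → 0 < qf (a x) ξ

/-- Quasi-normal coordinates at the boundary. -/
def QuasiNormal (U : Set (Fin (d + 1) → ℝ)) : Prop :=
  ∀ x ∈ U, x (Fin.last d) = 0 →
    (∀ j, j ≠ Fin.last d → a x (Fin.last d) j = 0) ∧ a x (Fin.last d) (Fin.last d) = 1

/-- The reflection `Σ`, flipping the sign of the `ζ`-component. -/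
def reflζ (ϱ : Phase d) : Phase d :=
  (ϱ.1, ϱ.2.1, ϱ.2.2.1, Function.update ϱ.2.2.2 (Fin.last d) (-ϱ.2.2.2 (Fin.last d)))

/-- The coordinate unit vector in the `ζ`-direction. -/
def eζ (d : ℕ) : Phase d := (0, 0, 0, Pi.single (Fin.last d) 1)

/-- The tangential projection `π_∥`. -/
def tproj (ϱ : Phase d) : Phase d :=
  (ϱ.1, ϱ.2.1, ϱ.2.2.1,
    Function.update ϱ.2.2.2 (Fin.last d)
      (ϱ.2.2.2 (Fin.last d) - Hpz a ϱ / (2 * a ϱ.2.1 (Fin.last d) (Fin.last d))))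

/-- The gliding vector field `H_p^G`. -/
def HpG (ϱ : Phase d) : Phase d :=
  Hp a ϱ - (Hp2z a ϱ / (2 * a ϱ.2.1 (Fin.last d) (Fin.last d))) • eζ d

/-- Extension of a boundary space point by `z = 0`. -/
def ext0 (x' : Fin d → ℝ) : Fin (d + 1) → ℝ := Fin.snoc x' 0

/-- Lift of a boundary phase point with prescribed `ζ`-component. -/
def liftB (ϱ' : BPhase d) (ζ : ℝ) : Phase d :=
  (ϱ'.1, ext0 ϱ'.2.1, ϱ'.2.2.1, Fin.snoc ϱ'.2.2.2 ζ)

/-- `r(ϱ') = τ² - ⟨a'(x')ξ', ξ'⟩`. -/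
def rb (ϱ' : BPhase d) : ℝ :=
  ϱ'.2.2.1 ^ 2 - ∑ i : Fin d, ∑ j : Fin d,
    a (ext0 ϱ'.2.1) (Fin.castSucc i) (Fin.castSucc j) * ϱ'.2.2.2 i * ϱ'.2.2.2 j

/-- The boundary integrand `Φq`. -/
def PhiFn (q : Phase d → ℝ) (ϱ' : BPhase d) : ℝ :=
  if 0 < rb a ϱ' then
    (q (liftB ϱ' (Real.sqrt (rb a ϱ'))) - q (liftB ϱ' (-Real.sqrt (rb a ϱ')))) /
      (2 * Real.sqrt (rb a ϱ'))
  else fderiv ℝ q (liftB ϱ' 0) (eζ d)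

/-- The support of a measure: points all of whose open neighbourhoods have positive measure. -/
def msupp {α : Type*} [TopologicalSpace α] [MeasurableSpace α]
    (μ : Measure α) : Set α :=
  {x | ∀ O : Set α, IsOpen O → x ∈ O → 0 < μ O}

/-- The boundary transport equation `ᵗH_p μ = f μ - ∫ (δ_{ϱ'⁺} - δ_{ϱ'⁻})/⟨ξ⁺-ξ⁻, n⟩ dν`. -/
def BTE (𝒰 : Set (Phase d)) (μ : Measure (Phase d)) (ν : Measure (BPhase d))
    (f : Phase d → ℝ) : Prop :=
  ∀ q : Phase d → ℝ, ContDiff ℝ 1 q → HasCompactSupport q → tsupport q ⊆ 𝒰 →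
    ∫ ϱ, fderiv ℝ q ϱ (Hp a ϱ) ∂μ =
      ∫ ϱ, f ϱ * q ϱ ∂μ - ∫ ϱ' in {ϱ' | 0 ≤ rb a ϱ'}, PhiFn a q ϱ' ∂ν

/-- Standing support assumptions:
`supp μ ⊆ Char p ∩ {z ≥ 0}` and `supp μ ∩ {(τ, ξ) = 0} = ∅`. -/
def StandingSupp (μ : Measure (Phase d)) : Prop :=
  msupp μ ⊆ CharSet a ∩ {ϱ | 0 ≤ zc ϱ} ∧
    ∀ ϱ ∈ msupp μ, ¬(ϱ.2.2.1 = 0 ∧ ϱ.2.2.2 = 0)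

/-- `μ` is a nonnegative Radon measure on the open set `𝒰`. -/
def RadonOn (𝒰 : Set (Phase d)) (μ : Measure (Phase d)) : Prop :=
  μ 𝒰ᶜ = 0 ∧ ∀ K : Set (Phase d), IsCompact K → K ⊆ 𝒰 → μ K < ⊤

/-- `ν` is a nonnegative Radon measure on the boundary phase space over `U`. -/
def BRadon (U : Set (Fin (d + 1) → ℝ)) (ν : Measure (BPhase d)) : Prop :=
  ν {ϱ' | ext0 ϱ'.2.1 ∉ U} = 0 ∧
    ∀ K : Set (BPhase d), IsCompact K → (∀ ϱ' ∈ K, ext0 ϱ'.2.1 ∈ U) → ν K < ⊤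

/-- A bicharacteristic valued in `V`, defined on the interval `J`. -/
def BicharOn (V : Set (Phase d)) (γ : ℝ → Phase d) (J : Set ℝ) : Prop :=
  J.OrdConnected ∧
    ∀ s ∈ J, γ s ∈ V ∧ psymb a (γ s) = 0 ∧ HasDerivWithinAt γ (Hp a (γ s)) J s

/-- A maximal bicharacteristic in `V`: it cannot be extended by a bicharacteristic in `V`. -/
def MaxBicharOn (V : Set (Phase d)) (γ : ℝ → Phase d) (J : Set ℝ) : Prop :=
  BicharOn a V γ J ∧
    ∀ (γ' : ℝ → Phase d) (J' : Set ℝ), BicharOn a V γ' J' → J ⊆ J' →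
      (∀ s ∈ J, γ' s = γ s) → J' = J

/-- A generalized bicharacteristic on `J ∖ B`. -/
structure IsGenBichar (J B : Set ℝ) (γ : ℝ → Phase d) : Prop where
  ordConn : J.OrdConnected
  subJ : B ⊆ J
  discr : ∀ S ∈ B, ∃ ε > 0, ∀ s ∈ B, |s - S| < ε → s = S
  memChar : ∀ s ∈ J \ B,
    psymb a (γ s) = 0 ∧ 0 ≤ zc (γ s) ∧ γ s ∉ Hplus a ∪ Hminus a
  derivHp : ∀ s ∈ J \ B, γ s ∉ Gsg a → HasDerivWithinAt γ (Hp a (γ s)) (J \ B) s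
  derivHpG : ∀ s ∈ J \ B, γ s ∈ Gsg a → HasDerivWithinAt γ (HpG a (γ s)) (J \ B) s
  posNear : ∀ S ∈ B, ∃ ε > 0, ∀ s ∈ (J \ B) ∩ Ioo (S - ε) (S + ε), 0 < zc (γ s)
  leftLim : ∀ S ∈ B, (∃ ε > 0, Icc (S - ε) S ⊆ J) →
    ∃ ϱm ∈ Hminus a, Tendsto γ (𝓝[(J \ B) ∩ Iio S] S) (𝓝 ϱm)
  rightLim : ∀ S ∈ B, (∃ ε > 0, Icc S (S + ε) ⊆ J) →
    ∃ ϱp ∈ Hplus a, Tendsto γ (𝓝[(J \ B) ∩ Ioi S] S) (𝓝 ϱp)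
  reflect : ∀ S ∈ B, (∃ ε > 0, Icc (S - ε) (S + ε) ⊆ J) →
    ∀ ϱm ϱp : Phase d,
      Tendsto γ (𝓝[(J \ B) ∩ Iio S] S) (𝓝 ϱm) →
      Tendsto γ (𝓝[(J \ B) ∩ Ioi S] S) (𝓝 ϱp) → ϱp = reflζ ϱm

/-- A broken bicharacteristic on `J ∖ B`. -/
structure IsBrokenBichar (J B : Set ℝ) (γ : ℝ → Phase d) : Prop where
  ordConn : J.OrdConnected
  subJ : B ⊆ J
  discr : ∀ S ∈ B, ∃ ε > 0, ∀ s ∈ B, |s - S| < ε → s = S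
  memChar : ∀ s ∈ J \ B,
    psymb a (γ s) = 0 ∧ 0 ≤ zc (γ s) ∧
      γ s ∉ Hplus a ∪ Hminus a ∪ Ggl a ∪ Gsg a
  derivHp : ∀ s ∈ J \ B, HasDerivWithinAt γ (Hp a (γ s)) (J \ B) s
  posNear : ∀ S ∈ B, ∃ ε > 0, ∀ s ∈ (J \ B) ∩ Ioo (S - ε) (S + ε), 0 < zc (γ s)
  leftLim : ∀ S ∈ B, (∃ ε > 0, Icc (S - ε) S ⊆ J) →
    ∃ ϱm ∈ Hminus a, Tendsto γ (𝓝[(J \ B) ∩ Iio S] S) (𝓝 ϱm)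
  rightLim : ∀ S ∈ B, (∃ ε > 0, Icc S (S + ε) ⊆ J) →
    ∃ ϱp ∈ Hplus a, Tendsto γ (𝓝[(J \ B) ∩ Ioi S] S) (𝓝 ϱp)
  reflect : ∀ S ∈ B, (∃ ε > 0, Icc (S - ε) (S + ε) ⊆ J) →
    ∀ ϱm ϱp : Phase d,
      Tendsto γ (𝓝[(J \ B) ∩ Iio S] S) (𝓝 ϱm) →
      Tendsto γ (𝓝[(J \ B) ∩ Ioi S] S) (𝓝 ϱp) → ϱp = reflζ ϱm

/-- The closure `γ̄` of a generalized bicharacteristic: its image together with its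
one-sided limits at reflection points. -/
def genClosure (J B : Set ℝ) (γ : ℝ → Phase d) : Set (Phase d) :=
  γ '' (J \ B) ∪
    {ϱ | ∃ S ∈ B,
      ((𝓝[(J \ B) ∩ Iio S] S).NeBot ∧ Tendsto γ (𝓝[(J \ B) ∩ Iio S] S) (𝓝 ϱ)) ∨
      ((𝓝[(J \ B) ∩ Ioi S] S).NeBot ∧ Tendsto γ (𝓝[(J \ B) ∩ Ioi S] S) (𝓝 ϱ))}

/-- A generalized bicharacteristic valued in `𝒰`. -/
def GenBicharIn (𝒰 : Set (Phase d)) (J B : Set ℝ) (γ : ℝ → Phase d) : Prop :=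
  IsGenBichar a J B γ ∧ ∀ s ∈ J \ B, γ s ∈ 𝒰

/-- A maximal generalized bicharacteristic in `𝒰`. -/
def MaxGenBicharIn (𝒰 : Set (Phase d)) (J B : Set ℝ) (γ : ℝ → Phase d) : Prop :=
  GenBicharIn a 𝒰 J B γ ∧
    ∀ (J' B' : Set ℝ) (γ' : ℝ → Phase d), GenBicharIn a 𝒰 J' B' γ' →
      J ⊆ J' → B' ∩ J = B → (∀ s ∈ J \ B, γ' s = γ s) → J' = J

section AuxStmt7
variable {U : Set (Fin (d + 1) → ℝ)}

lemma aux_diffAt (hC1 : ContDiffOn ℝ 1 a U) (hU : IsOpen U) {x : Fin (d + 1) → ℝ}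
    (hx : x ∈ U) : DifferentiableAt ℝ a x :=
  ((hC1.differentiableOn one_ne_zero).differentiableAt (hU.mem_nhds hx))

lemma qf_hasFDerivAt {x : Fin (d + 1) → ℝ} (ha : DifferentiableAt ℝ a x)
    (ξ : Fin (d + 1) → ℝ) :
    HasFDerivAt (fun y => qf (a y) ξ)
      (∑ i, ∑ j, ξ j • ξ i •
        (((ContinuousLinearMap.proj j).comp
            (ContinuousLinearMap.proj i : (Fin (d+1) → Fin (d+1) → ℝ) →L[ℝ] (Fin (d+1) → ℝ))).comp
          (fderiv ℝ a x))) x := by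
  have hterm : ∀ i j : Fin (d + 1),
      HasFDerivAt (fun y => a y i j * ξ i * ξ j)
        (ξ j • ξ i •
          (((ContinuousLinearMap.proj j).comp
              (ContinuousLinearMap.proj i : (Fin (d+1) → Fin (d+1) → ℝ) →L[ℝ] (Fin (d+1) → ℝ))).comp
            (fderiv ℝ a x))) x := by
    intro i j
    have h0 : HasFDerivAt (fun y => a y i j)
        (((ContinuousLinearMap.proj j).comp
            (ContinuousLinearMap.proj i : (Fin (d+1) → Fin (d+1) → ℝ) →L[ℝ] (Fin (d+1) → ℝ))).comp
          (fderiv ℝ a x)) x := by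
      exact (((ContinuousLinearMap.proj j).comp
        (ContinuousLinearMap.proj i : (Fin (d+1) → Fin (d+1) → ℝ) →L[ℝ] (Fin (d+1) → ℝ))).hasFDerivAt).comp x ha.hasFDerivAt
    exact (h0.mul_const (ξ i)).mul_const (ξ j)
  have := HasFDerivAt.fun_sum (u := Finset.univ)
    (fun i _ => HasFDerivAt.fun_sum (u := Finset.univ) (fun j _ => hterm i j))
  simpa [qf] using this

lemma qf_fderiv_apply (hC1 : ContDiffOn ℝ 1 a U) (hU : IsOpen U) {x : Fin (d + 1) → ℝ}
    (hx : x ∈ U) (ξ v : Fin (d + 1) → ℝ) :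
    fderiv ℝ (fun y => qf (a y) ξ) x v =
      ∑ i, ∑ j, fderiv ℝ a x v i j * ξ i * ξ j := by
  rw [(qf_hasFDerivAt a (aux_diffAt a hC1 hU hx) ξ).fderiv]
  simp only [ContinuousLinearMap.coe_sum', Finset.sum_apply,
    ContinuousLinearMap.coe_smul', Pi.smul_apply, ContinuousLinearMap.coe_comp',
    Function.comp_apply, ContinuousLinearMap.proj_apply, smul_eq_mul]
  exact Finset.sum_congr rfl fun i _ => Finset.sum_congr rfl fun j _ => by ring


lemma isOpen_Om (hU : IsOpen U) : IsOpen {ϱ : Phase d | ϱ.2.1 ∈ U} :=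
  hU.preimage (continuous_fst.comp continuous_snd)

lemma contOn_x : Continuous (fun ϱ : Phase d => ϱ.2.1) := continuous_fst.comp continuous_snd
lemma contOn_tau : Continuous (fun ϱ : Phase d => ϱ.2.2.1) :=
  continuous_fst.comp (continuous_snd.comp continuous_snd)
lemma contOn_xi : Continuous (fun ϱ : Phase d => ϱ.2.2.2) :=
  continuous_snd.comp (continuous_snd.comp continuous_snd)

lemma contOn_a (hC1 : ContDiffOn ℝ 1 a U) :
    ContinuousOn (fun ϱ : Phase d => a ϱ.2.1) {ϱ : Phase d | ϱ.2.1 ∈ U} :=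
  hC1.continuousOn.comp (contOn_x (d := d)).continuousOn (fun _ h => h)

lemma contOn_aij (hC1 : ContDiffOn ℝ 1 a U) (i j : Fin (d + 1)) :
    ContinuousOn (fun ϱ : Phase d => a ϱ.2.1 i j) {ϱ : Phase d | ϱ.2.1 ∈ U} :=
  (continuous_apply j).comp_continuousOn ((continuous_apply i).comp_continuousOn (contOn_a a hC1))

lemma contOn_Hpz (hC1 : ContDiffOn ℝ 1 a U) :
    ContinuousOn (Hpz a) {ϱ : Phase d | ϱ.2.1 ∈ U} := by
  apply continuousOn_const.mul
  exact continuousOn_finset_sum _ fun j _ =>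
    (contOn_aij a hC1 _ j).mul ((continuous_apply j).comp (contOn_xi (d := d))).continuousOn

lemma contOn_psymb (hC1 : ContDiffOn ℝ 1 a U) :
    ContinuousOn (psymb a) {ϱ : Phase d | ϱ.2.1 ∈ U} := by
  apply ContinuousOn.add
  · exact ((contOn_tau (d := d)).pow 2).neg.continuousOn
  · unfold qf
    exact continuousOn_finset_sum _ fun i _ => continuousOn_finset_sum _ fun j _ =>
      ((contOn_aij a hC1 i j).mul
        ((continuous_apply i).comp (contOn_xi (d := d))).continuousOn).mul
        ((continuous_apply j).comp (contOn_xi (d := d))).continuousOn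

lemma contOn_fderiv_a (hC1 : ContDiffOn ℝ 1 a U) (hU : IsOpen U) (v : Fin (d+1) → ℝ)
    (i j : Fin (d + 1)) :
    ContinuousOn (fun ϱ : Phase d => fderiv ℝ a ϱ.2.1 v i j) {ϱ : Phase d | ϱ.2.1 ∈ U} := by
  have h1 : ContinuousOn (fun ϱ : Phase d => fderiv ℝ a ϱ.2.1) {ϱ : Phase d | ϱ.2.1 ∈ U} :=
    (hC1.continuousOn_fderiv_of_isOpen hU le_rfl).comp
      (contOn_x (d := d)).continuousOn (fun _ h => h)
  exact (continuous_apply j).comp_continuousOn <|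
    (continuous_apply i).comp_continuousOn <| h1.clm_apply continuousOn_const

lemma contOn_Hp (hC1 : ContDiffOn ℝ 1 a U) (hU : IsOpen U) :
    ContinuousOn (Hp a) {ϱ : Phase d | ϱ.2.1 ∈ U} := by
  unfold Hp
  refine ContinuousOn.prodMk ?_ (ContinuousOn.prodMk ?_ (ContinuousOn.prodMk ?_ ?_))
  · exact ((continuous_const.mul (contOn_tau (d := d))).neg).continuousOn
  · refine continuousOn_pi.2 fun i => continuousOn_const.mul ?_
    exact continuousOn_finset_sum _ fun j _ =>
      (contOn_aij a hC1 i j).mul ((continuous_apply j).comp (contOn_xi (d := d))).continuousOn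
  · exact continuousOn_const
  · refine ContinuousOn.congr (f := fun ϱ : Phase d => fun k =>
      -(∑ i, ∑ j, fderiv ℝ a ϱ.2.1 (Pi.single k 1) i j * ϱ.2.2.2 i * ϱ.2.2.2 j)) ?_ ?_
    · refine continuousOn_pi.2 fun k => ContinuousOn.neg ?_
      exact continuousOn_finset_sum _ fun i _ => continuousOn_finset_sum _ fun j _ =>
        ((contOn_fderiv_a a hC1 hU _ i j).mul
          ((continuous_apply i).comp (contOn_xi (d := d))).continuousOn).mul
          ((continuous_apply j).comp (contOn_xi (d := d))).continuousOn
    · intro ϱ hϱ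
      funext k
      show -((fderiv ℝ (fun y => qf (a y) ϱ.2.2.2) ϱ.2.1) (Pi.single k 1)) = _
      rw [qf_fderiv_apply a hC1 hU hϱ]


/-- The time/momentum reversal. -/
def sgm (ϱ : Phase d) : Phase d := (ϱ.1, ϱ.2.1, -ϱ.2.2.1, fun j => -ϱ.2.2.2 j)

/-- `sgm` as a continuous linear map. -/
def sgmL : Phase d →L[ℝ] Phase d :=
  (ContinuousLinearMap.fst ℝ ℝ ((Fin (d+1) → ℝ) × ℝ × (Fin (d+1) → ℝ))).prod <|
  ((ContinuousLinearMap.fst ℝ (Fin (d+1) → ℝ) (ℝ × (Fin (d+1) → ℝ))).comp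
    (ContinuousLinearMap.snd ℝ ℝ ((Fin (d+1) → ℝ) × ℝ × (Fin (d+1) → ℝ)))).prod <|
  (-((ContinuousLinearMap.fst ℝ ℝ (Fin (d+1) → ℝ)).comp
      ((ContinuousLinearMap.snd ℝ (Fin (d+1) → ℝ) (ℝ × (Fin (d+1) → ℝ))).comp
        (ContinuousLinearMap.snd ℝ ℝ ((Fin (d+1) → ℝ) × ℝ × (Fin (d+1) → ℝ)))))).prod
  (-((ContinuousLinearMap.snd ℝ ℝ (Fin (d+1) → ℝ)).comp
      ((ContinuousLinearMap.snd ℝ (Fin (d+1) → ℝ) (ℝ × (Fin (d+1) → ℝ))).comp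
        (ContinuousLinearMap.snd ℝ ℝ ((Fin (d+1) → ℝ) × ℝ × (Fin (d+1) → ℝ))))))

lemma sgmL_apply (ϱ : Phase d) : sgmL ϱ = sgm ϱ := by
  simp only [sgmL, sgm, ContinuousLinearMap.prod_apply, ContinuousLinearMap.coe_comp',
    Function.comp_apply, ContinuousLinearMap.neg_apply, ContinuousLinearMap.coe_fst',
    ContinuousLinearMap.coe_snd']
  refine Prod.ext rfl (Prod.ext rfl (Prod.ext rfl ?_))
  funext j
  rfl

lemma continuous_sgm : Continuous (sgm (d := d)) := by
  have : (sgm (d := d)) = fun ϱ => sgmL ϱ := by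
    funext ϱ; rw [sgmL_apply]
  rw [this]; exact sgmL.continuous

lemma sgm_sgm (ϱ : Phase d) : sgm (sgm ϱ) = ϱ := by
  simp [sgm]

lemma qf_neg (A : Fin (d + 1) → Fin (d + 1) → ℝ) (ξ : Fin (d + 1) → ℝ) :
    qf A (fun j => -ξ j) = qf A ξ := by
  unfold qf
  exact Finset.sum_congr rfl fun i _ => Finset.sum_congr rfl fun j _ => by ring

lemma psymb_sgm (ϱ : Phase d) : psymb a (sgm ϱ) = psymb a ϱ := by
  unfold psymb sgm
  simp [qf_neg]

lemma zc_sgm (ϱ : Phase d) : zc (sgm ϱ) = zc ϱ := rfl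

lemma Hpz_sgm (ϱ : Phase d) : Hpz a (sgm ϱ) = -Hpz a ϱ := by
  unfold Hpz sgm
  simp [Finset.mul_sum, mul_neg]

lemma sgm_mem_Hminus {ϱ : Phase d} (h : ϱ ∈ Hplus a) : sgm ϱ ∈ Hminus a := by
  refine ⟨h.1, ?_, ?_⟩
  · rw [psymb_sgm]; exact h.2.1
  · rw [Hpz_sgm]; linarith [h.2.2]

lemma Hp_sgm (ϱ : Phase d) :
    Hp a (sgm ϱ) = (2 * ϱ.2.2.1,
      fun i => -(2 * ∑ j, a ϱ.2.1 i j * ϱ.2.2.2 j), (0 : ℝ),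
      fun k => -(fderiv ℝ (fun y => qf (a y) ϱ.2.2.2) ϱ.2.1 (Pi.single k 1))) := by
  unfold Hp
  refine Prod.ext ?_ (Prod.ext ?_ (Prod.ext rfl ?_))
  · show -(2 * -ϱ.2.2.1) = 2 * ϱ.2.2.1
    ring
  · show (fun i => 2 * ∑ j, a ϱ.2.1 i j * (-ϱ.2.2.2 j)) = _
    funext i
    have h : ∑ j, a ϱ.2.1 i j * (-ϱ.2.2.2 j) = -∑ j, a ϱ.2.1 i j * ϱ.2.2.2 j := by
      rw [← Finset.sum_neg_distrib]
      exact Finset.sum_congr rfl fun j _ => by ring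
    show 2 * ∑ j, a ϱ.2.1 i j * (-ϱ.2.2.2 j) = -(2 * ∑ j, a ϱ.2.1 i j * ϱ.2.2.2 j)
    rw [h]; ring
  · show (fun k => -(fderiv ℝ (fun y => qf (a y) (fun j => -ϱ.2.2.2 j)) ϱ.2.1 (Pi.single k 1))) = _
    have h4 : (fun y => qf (a y) (fun j => -ϱ.2.2.2 j)) = (fun y => qf (a y) ϱ.2.2.2) :=
      funext fun y => qf_neg _ _
    rw [h4]

lemma sgm_neg_Hp (ϱ : Phase d) :
    sgm (-(Hp a ϱ)) = (2 * ϱ.2.2.1,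
      fun i => -(2 * ∑ j, a ϱ.2.1 i j * ϱ.2.2.2 j), (0 : ℝ),
      fun k => -(fderiv ℝ (fun y => qf (a y) ϱ.2.2.2) ϱ.2.1 (Pi.single k 1))) := by
  unfold sgm Hp
  refine Prod.ext ?_ (Prod.ext ?_ (Prod.ext ?_ ?_))
  · show -(-(2 * ϱ.2.2.1)) = 2 * ϱ.2.2.1
    ring
  · show -(fun i => 2 * ∑ j, a ϱ.2.1 i j * ϱ.2.2.2 j) = _
    funext i
    show -(2 * ∑ j, a ϱ.2.1 i j * ϱ.2.2.2 j) = -(2 * ∑ j, a ϱ.2.1 i j * ϱ.2.2.2 j)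
    rfl
  · show -(-(0:ℝ)) = 0
    ring
  · funext k
    show -(-(-(fderiv ℝ (fun y => qf (a y) ϱ.2.2.2) ϱ.2.1 (Pi.single k 1)))) = _
    ring

lemma sgmL_neg_Hp (ϱ : Phase d) : sgmL (-(Hp a ϱ)) = Hp a (sgm ϱ) := by
  rw [sgmL_apply, sgm_neg_Hp, Hp_sgm]


lemma hasDerivWithinAt_refl_const {k : ℝ} {J' : Set ℝ} {s : ℝ} :
    HasDerivWithinAt (fun u => k - u) (-1 : ℝ) J' s := by
  simpa using (hasDerivWithinAt_id s J').const_sub k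

lemma bichar_refl {V : Set (Phase d)} (hV : ∀ ϱ ∈ V, sgm ϱ ∈ V) {γ : ℝ → Phase d}
    {J : Set ℝ} (k : ℝ) (h : BicharOn a V γ J) :
    BicharOn a V (fun s => sgm (γ (k - s))) ((fun s => k - s) ⁻¹' J) := by
  constructor
  · constructor
    intro x hx y hy z hz
    rw [mem_Icc] at hz
    have : k - z ∈ Icc (k - y) (k - x) := by
      rw [mem_Icc]; constructor <;> linarith [hz.1, hz.2]
    exact h.1.out hy hx this
  · intro s hs
    have hr : k - s ∈ J := hs
    obtain ⟨hVm, hp, hd⟩ := h.2 (k - s) hr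
    refine ⟨hV _ hVm, by rw [psymb_sgm]; exact hp, ?_⟩
    have inner : HasDerivWithinAt (fun u => γ (k - u)) ((-1 : ℝ) • Hp a (γ (k - s)))
        ((fun s => k - s) ⁻¹' J) s :=
      HasDerivWithinAt.scomp s hd hasDerivWithinAt_refl_const (fun u hu => hu)
    have outer := sgmL.hasFDerivAt.comp_hasDerivWithinAt s inner
    have : sgmL ((-1 : ℝ) • Hp a (γ (k - s))) = Hp a (sgm (γ (k - s))) := by
      rw [neg_one_smul, sgmL_neg_Hp]
    rw [this] at outer
    refine outer.congr (fun u hu => ?_) ?_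
    · exact sgmL_apply _
    · exact sgmL_apply _

lemma preimage_refl_Ioo (s₁ s₂ : ℝ) :
    (fun s => (s₁ + s₂) - s) ⁻¹' (Ioo s₁ s₂) = Ioo s₁ s₂ := by
  ext s
  simp only [mem_preimage, mem_Ioo]
  constructor <;> rintro ⟨h1, h2⟩ <;> constructor <;> linarith

lemma maxbichar_refl {V : Set (Phase d)} (hV : ∀ ϱ ∈ V, sgm ϱ ∈ V) {γ : ℝ → Phase d}
    {s₁ s₂ : ℝ} (h : MaxBicharOn a V γ (Ioo s₁ s₂)) :
    MaxBicharOn a V (fun s => sgm (γ ((s₁ + s₂) - s))) (Ioo s₁ s₂) := by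
  set k := s₁ + s₂ with hk
  constructor
  · have := bichar_refl a hV k h.1
    rwa [preimage_refl_Ioo] at this
  · intro γ' J' hb' hsub heq
    have hb'' := bichar_refl a hV k hb'
    have hJsub : Ioo s₁ s₂ ⊆ (fun s => k - s) ⁻¹' J' := by
      intro s hs
      exact hsub (by rw [← preimage_refl_Ioo s₁ s₂] at hs; exact hs)
    have hδeq : ∀ s ∈ Ioo s₁ s₂, sgm (γ' (k - s)) = γ s := by
      intro s hs
      have hks : k - s ∈ Ioo s₁ s₂ := by rw [← preimage_refl_Ioo s₁ s₂] at hs; exact hs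
      rw [heq (k - s) hks]
      show sgm (sgm (γ (k - (k - s)))) = γ s
      rw [sgm_sgm, show k - (k - s) = s by ring]
    have hres := h.2 (fun s => sgm (γ' (k - s))) ((fun s => k - s) ⁻¹' J') hb'' hJsub hδeq
    have : J' = (fun s => k - s) ⁻¹' ((fun s => k - s) ⁻¹' J') := by
      ext s
      simp only [mem_preimage]
      rw [show k - (k - s) = s by ring]
    rw [this, hres, preimage_refl_Ioo]


/-- The `z`-coordinate as a continuous linear map. -/
def zcL : Phase d →L[ℝ] ℝ :=
  (ContinuousLinearMap.proj (Fin.last d)).comp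
    ((ContinuousLinearMap.fst ℝ (Fin (d+1) → ℝ) (ℝ × (Fin (d+1) → ℝ))).comp
      (ContinuousLinearMap.snd ℝ ℝ ((Fin (d+1) → ℝ) × ℝ × (Fin (d+1) → ℝ))))

lemma zcL_apply (ϱ : Phase d) : zcL ϱ = zc ϱ := rfl

lemma zcL_Hp (ϱ : Phase d) : zcL (Hp a ϱ) = Hpz a ϱ := rfl

lemma core {U : Set (Fin (d + 1) → ℝ)} (hU : IsOpen U) (hmet : MetricHyp a U)
    (ϱ0 : Phase d) (hx0 : ϱ0.2.1 ∈ U) (hH : ϱ0 ∈ Hminus a) :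
    ∃ S₀ > 0, ∃ W : Set (Phase d), IsOpen W ∧ ϱ0 ∈ W ∧
      W ⊆ {ϱ : Phase d | ϱ.2.1 ∈ U ∧ Hpz a ϱ < 0} ∧
      ∀ (γ : ℝ → Phase d) (s₁ s₂ : ℝ), s₁ < s₂ →
        MaxBicharOn a {ϱ : Phase d | ϱ.2.1 ∈ U ∧ 0 < zc ϱ} γ (Set.Ioo s₁ s₂) →
        ∀ ϱ : Phase d, Tendsto γ (𝓝[Set.Ioo s₁ s₂] s₂) (𝓝 ϱ) →
          ϱ ∈ W ∩ Hminus a → S₀ ≤ s₂ - s₁ := by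
  obtain ⟨hC1, -, -⟩ := hmet
  set Ω : Set (Phase d) := {ϱ : Phase d | ϱ.2.1 ∈ U} with hΩdef
  have hΩo : IsOpen Ω := isOpen_Om hU
  have hϱ0Ω : ϱ0 ∈ Ω := hx0
  set c : ℝ := -Hpz a ϱ0 / 2 with hcdef
  have hc : 0 < c := by simp only [hcdef]; linarith [hH.2.2]
  -- an open set where Hpz < -c
  have hOneg : IsOpen (Ω ∩ Hpz a ⁻¹' Iio (-c)) :=
    (contOn_Hpz a hC1).isOpen_inter_preimage hΩo isOpen_Iio
  have hϱ0neg : ϱ0 ∈ Ω ∩ Hpz a ⁻¹' Iio (-c) := by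
    refine ⟨hϱ0Ω, ?_⟩
    simp only [mem_preimage, mem_Iio, hcdef]
    linarith [hH.2.2]
  obtain ⟨ε, hε, hball⟩ := Metric.isOpen_iff.1 hOneg ϱ0 hϱ0neg
  set r : ℝ := ε / 3 with hrdef
  have hr : 0 < r := by positivity
  have hKsub : Metric.closedBall ϱ0 (2 * r) ⊆ Ω ∩ Hpz a ⁻¹' Iio (-c) := by
    intro ϱ hϱ
    apply hball
    rw [Metric.mem_closedBall] at hϱ
    rw [Metric.mem_ball]
    calc dist ϱ ϱ0 ≤ 2 * r := hϱ
    _ < ε := by rw [hrdef]; linarith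
  set K : Set (Phase d) := Metric.closedBall ϱ0 (2 * r) with hKdef
  have hKcp : IsCompact K := isCompact_closedBall ϱ0 (2 * r)
  have hKHpz : ∀ ϱ ∈ K, Hpz a ϱ < -c := fun ϱ hϱ => (hKsub hϱ).2
  have hKΩ : K ⊆ Ω := fun ϱ hϱ => (hKsub hϱ).1
  obtain ⟨M0, hM0⟩ := hKcp.exists_bound_of_continuousOn ((contOn_Hp a hC1 hU).mono hKΩ)
  set M : ℝ := max M0 1 with hMdef
  have hM1 : (1 : ℝ) ≤ M := le_max_right _ _
  have hMpos : 0 < M := lt_of_lt_of_le one_pos hM1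
  have hM : ∀ ϱ ∈ K, ‖Hp a ϱ‖ ≤ M := fun ϱ hϱ => (hM0 ϱ hϱ).trans (le_max_left _ _)
  refine ⟨r / (2 * M), by positivity, Metric.ball ϱ0 r, Metric.isOpen_ball,
    Metric.mem_ball_self hr, ?_, ?_⟩
  · intro ϱ hϱ
    have hϱK : ϱ ∈ K := Metric.ball_subset_closedBall.trans
      (Metric.closedBall_subset_closedBall (by linarith)) hϱ
    exact ⟨hKΩ hϱK, (hKHpz ϱ hϱK).trans (by linarith)⟩
  intro γ s₁ s₂ hs hmax ϱ hten hϱW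
  by_contra hcon
  push_neg at hcon
  set S₀ : ℝ := r / (2 * M) with hS₀def
  have hS₀ : s₂ - s₁ < S₀ := hcon
  set J : Set ℝ := Ioo s₁ s₂ with hJdef
  set V : Set (Phase d) := {ϱ : Phase d | ϱ.2.1 ∈ U ∧ 0 < zc ϱ} with hVdef
  obtain ⟨hbic, hmaximal⟩ := hmax
  have hmem : ∀ s ∈ J, γ s ∈ V := fun s hs' => (hbic.2 s hs').1
  have hp0 : ∀ s ∈ J, psymb a (γ s) = 0 := fun s hs' => (hbic.2 s hs').2.1
  have hder : ∀ s ∈ J, HasDerivAt γ (Hp a (γ s)) s := fun s hs' =>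
    ((hbic.2 s hs').2.2).hasDerivAt (isOpen_Ioo.mem_nhds hs')
  haveI hne2 : (𝓝[J] s₂).NeBot := by
    rw [hJdef, nhdsWithin_Ioo_eq_nhdsLT hs]; exact nhdsLT_neBot s₂
  haveI hne1 : (𝓝[J] s₁).NeBot := by
    rw [hJdef, nhdsWithin_Ioo_eq_nhdsGT hs]; exact nhdsGT_neBot s₁
  have hϱr : ‖ϱ - ϱ0‖ < r := by
    have := hϱW.1; rwa [Metric.mem_ball, dist_eq_norm] at this
  -- the confinement set
  set C : Set ℝ := {t | t ∈ J ∧ ∀ u ∈ Ico t s₂, γ u ∈ K} with hCdef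
  -- Step A : C is nonempty
  have hCne : C.Nonempty := by
    have hevent : γ ⁻¹' Metric.ball ϱ0 (2 * r) ∈ 𝓝[J] s₂ := by
      apply hten
      apply Metric.isOpen_ball.mem_nhds
      rw [Metric.mem_ball, dist_eq_norm]
      linarith
    rw [mem_nhdsWithin] at hevent
    obtain ⟨O, hOo, hs₂O, hOsub⟩ := hevent
    obtain ⟨δ, hδ, hδball⟩ := Metric.isOpen_iff.1 hOo s₂ hs₂O
    set t0 : ℝ := max s₁ (s₂ - δ / 2) with ht0def
    have ht0 : t0 < s₂ := max_lt hs (by linarith)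
    have hs₁t0 : s₁ ≤ t0 := le_max_left _ _
    refine ⟨(t0 + s₂) / 2, ⟨by linarith, by linarith⟩, ?_⟩
    intro u hu
    have huJ : u ∈ J := ⟨by linarith [hu.1], hu.2⟩
    have huO : u ∈ O := by
      apply hδball
      rw [Metric.mem_ball, Real.dist_eq, abs_lt]
      have h1 : s₂ - δ / 2 ≤ t0 := le_max_right _ _
      constructor <;> [linarith [hu.1]; linarith [hu.2]]
    exact Metric.ball_subset_closedBall (hOsub ⟨huO, huJ⟩)
  -- Step B : the key estimate on confined tails
  have hestC : ∀ t ∈ C, ∀ s ∈ Ico t s₂, ‖γ s - ϱ‖ ≤ M * (s₂ - s) := by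
    intro t htC s hsI
    have hlip : ∀ x ∈ Ico t s₂, ∀ y ∈ Ico t s₂, ‖γ y - γ x‖ ≤ M * ‖y - x‖ := by
      intro x hx y hy
      refine Convex.norm_image_sub_le_of_norm_hasDerivWithin_le (f' := fun u => Hp a (γ u))
        (fun u hu => ?_) (fun u hu => hM _ (htC.2 u hu)) (convex_Ico t s₂) hx hy
      exact (hder u ⟨lt_of_lt_of_le htC.1.1 hu.1, hu.2⟩).hasDerivWithinAt
    have htends : Tendsto (fun u => ‖γ u - γ s‖) (𝓝[J] s₂) (𝓝 ‖ϱ - γ s‖) :=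
      ((hten.sub tendsto_const_nhds).norm)
    have hev : ∀ᶠ u in 𝓝[J] s₂, ‖γ u - γ s‖ ≤ M * (s₂ - s) := by
      have hIoo : Ioo s s₂ ∈ 𝓝[J] s₂ := by
        rw [hJdef, nhdsWithin_Ioo_eq_nhdsLT hs]
        exact Ioo_mem_nhdsLT_of_mem ⟨hsI.2, le_rfl⟩
      filter_upwards [hIoo] with u hu
      calc ‖γ u - γ s‖ ≤ M * ‖u - s‖ :=
            hlip s hsI u ⟨le_trans hsI.1 (le_of_lt hu.1), hu.2⟩
      _ ≤ M * (s₂ - s) := by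
            apply mul_le_mul_of_nonneg_left _ (le_of_lt hMpos)
            rw [Real.norm_eq_abs, abs_le]
            constructor <;> [linarith [hu.1, hsI.2]; linarith [hu.2]]
    have := le_of_tendsto htends hev
    rwa [norm_sub_rev] at this
  have hest3r : ∀ t ∈ C, ∀ s ∈ Ico t s₂, ‖γ s - ϱ0‖ ≤ 3 / 2 * r := by
    intro t htC s hsI
    have h1 := hestC t htC s hsI
    have h2 : M * (s₂ - s) ≤ M * S₀ := by
      apply mul_le_mul_of_nonneg_left _ (le_of_lt hMpos)
      have : s₁ < s := lt_of_lt_of_le htC.1.1 hsI.1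
      linarith
    have h3 : M * S₀ = r / 2 := by
      rw [hS₀def]; field_simp
    calc ‖γ s - ϱ0‖ ≤ ‖γ s - ϱ‖ + ‖ϱ - ϱ0‖ := norm_sub_le_norm_sub_add_norm_sub _ _ _
    _ ≤ M * S₀ + r := by linarith
    _ ≤ 3 / 2 * r := by linarith
  -- Step C : every point of J has a confined tail
  have hCall : ∀ s ∈ J, ∃ t ∈ C, t ≤ s := by
    by_contra hcon2
    push_neg at hcon2
    obtain ⟨sstar, hsstar, hlb⟩ := hcon2
    have hbdd : BddBelow C := ⟨sstar, fun t ht => le_of_lt (hlb t ht)⟩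
    set t₀ : ℝ := sInf C with ht₀def
    have ht₀lb : sstar ≤ t₀ := le_csInf hCne (fun t ht => le_of_lt (hlb t ht))
    obtain ⟨tw, htw⟩ := id hCne
    have ht₀ub : t₀ < s₂ := lt_of_le_of_lt (csInf_le hbdd htw) htw.1.2
    have ht₀J : t₀ ∈ J := ⟨lt_of_lt_of_le hsstar.1 ht₀lb, ht₀ub⟩
    have hclaim1 : ∀ s ∈ Ioo t₀ s₂, ‖γ s - ϱ0‖ ≤ 3 / 2 * r := by
      intro s hsI
      have : ∃ t ∈ C, t < s := by
        by_contra hcc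
        push_neg at hcc
        exact absurd (le_csInf hCne hcc) (not_le.2 hsI.1)
      obtain ⟨t, htC, hts⟩ := this
      exact hest3r t htC s ⟨le_of_lt hts, hsI.2⟩
    have hcont₀ : ContinuousAt γ t₀ := (hder t₀ ht₀J).continuousAt
    have hclaim2 : ‖γ t₀ - ϱ0‖ ≤ 3 / 2 * r := by
      haveI : (𝓝[Ioo t₀ s₂] t₀).NeBot := by
        rw [nhdsWithin_Ioo_eq_nhdsGT ht₀ub]; exact nhdsGT_neBot t₀
      have htd : Tendsto (fun s => ‖γ s - ϱ0‖) (𝓝[Ioo t₀ s₂] t₀) (𝓝 ‖γ t₀ - ϱ0‖) :=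
        (((hcont₀.tendsto.mono_left (nhdsWithin_le_nhds (s := Ioo t₀ s₂))).sub
          tendsto_const_nhds).norm)
      refine le_of_tendsto htd ?_
      filter_upwards [eventually_mem_nhdsWithin] with s hs'
      exact hclaim1 s hs'
    obtain ⟨δ, hδ, hδcont⟩ := Metric.tendsto_nhds_nhds.1 hcont₀.tendsto (r / 2) (by positivity)
    set t₁ : ℝ := max (t₀ - δ / 2) ((s₁ + t₀) / 2) with ht₁def
    have ht₁lt : t₁ < t₀ := max_lt (by linarith) (by linarith [ht₀J.1])
    have ht₁J : t₁ ∈ J :=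
      ⟨lt_of_lt_of_le (by linarith [ht₀J.1]) (le_max_right _ _), lt_trans ht₁lt ht₀ub⟩
    have ht₁C : t₁ ∈ C := by
      refine ⟨ht₁J, fun u hu => ?_⟩
      rcases le_or_gt u t₀ with hc1 | hc2
      · have hdist : dist u t₀ < δ := by
          rw [Real.dist_eq, abs_lt]
          have := le_max_left (t₀ - δ / 2) ((s₁ + t₀) / 2)
          constructor <;> [linarith [hu.1]; linarith]
        have := hδcont hdist
        rw [dist_eq_norm] at this
        rw [hKdef, Metric.mem_closedBall, dist_eq_norm]
        calc ‖γ u - ϱ0‖ ≤ ‖γ u - γ t₀‖ + ‖γ t₀ - ϱ0‖ := norm_sub_le_norm_sub_add_norm_sub _ _ _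
        _ ≤ r / 2 + 3 / 2 * r := by linarith
        _ ≤ 2 * r := by linarith
      · rw [hKdef, Metric.mem_closedBall, dist_eq_norm]
        calc ‖γ u - ϱ0‖ ≤ 3 / 2 * r := hclaim1 u ⟨hc2, hu.2⟩
        _ ≤ 2 * r := by linarith
    exact absurd (csInf_le hbdd ht₁C) (not_le.2 ht₁lt)
  -- Step D : global confinement and global estimates
  have hball' : ∀ s ∈ J, γ s ∈ K := by
    intro s hs'
    obtain ⟨t, htC, hts⟩ := hCall s hs'
    exact htC.2 s ⟨hts, hs'.2⟩
  have hlipJ : ∀ x ∈ J, ∀ y ∈ J, ‖γ y - γ x‖ ≤ M * ‖y - x‖ := by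
    intro x hx y hy
    refine Convex.norm_image_sub_le_of_norm_hasDerivWithin_le (f' := fun u => Hp a (γ u))
      (fun u hu => (hder u hu).hasDerivWithinAt) (fun u hu => hM _ (hball' u hu))
      (convex_Ioo s₁ s₂) hx hy
  -- Step E : the limit at s₁ exists
  have hcauchy : Cauchy (Filter.map γ (𝓝[J] s₁)) := by
    rw [Metric.cauchy_iff]
    refine ⟨Filter.NeBot.map hne1 γ, fun ε' hε' => ?_⟩
    set b : ℝ := min s₂ (s₁ + ε' / (2 * M)) with hbdef
    have hbgt : s₁ < b := lt_min hs (by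
      have h := div_pos hε' (mul_pos two_pos hMpos); linarith)
    have hTmem : Ioo s₁ b ∈ 𝓝[J] s₁ := by
      rw [hJdef, nhdsWithin_Ioo_eq_nhdsGT hs]
      exact Ioo_mem_nhdsGT_of_mem ⟨le_rfl, hbgt⟩
    refine ⟨γ '' Ioo s₁ b, ?_, ?_⟩
    · rw [Filter.mem_map]
      exact Filter.mem_of_superset hTmem (subset_preimage_image γ _)
    · rintro x ⟨u, hu, rfl⟩ y ⟨v, hv, rfl⟩
      have huJ : u ∈ J := ⟨hu.1, lt_of_lt_of_le hu.2 (min_le_left _ _)⟩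
      have hvJ : v ∈ J := ⟨hv.1, lt_of_lt_of_le hv.2 (min_le_left _ _)⟩
      rw [dist_eq_norm]
      have h1 : ‖γ v - γ u‖ ≤ M * ‖v - u‖ := hlipJ u huJ v hvJ
      rw [norm_sub_rev]
      have h2 : ‖v - u‖ ≤ ε' / (2 * M) := by
        have hub : u < s₁ + ε' / (2 * M) := lt_of_lt_of_le hu.2 (min_le_right _ _)
        have hvb : v < s₁ + ε' / (2 * M) := lt_of_lt_of_le hv.2 (min_le_right _ _)
        rw [Real.norm_eq_abs, abs_le]
        constructor <;> linarith [hu.1, hv.1, hub, hvb]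
      calc ‖γ v - γ u‖ ≤ M * (ε' / (2 * M)) :=
        h1.trans (mul_le_mul_of_nonneg_left h2 (le_of_lt hMpos))
      _ = ε' / 2 := by field_simp
      _ < ε' := by linarith
  obtain ⟨L, hL⟩ := CompleteSpace.complete hcauchy
  have hLt : Tendsto γ (𝓝[J] s₁) (𝓝 L) := hL
  -- Step F : properties of the limit L
  have hLK : L ∈ K := by
    refine hKcp.isClosed.mem_of_tendsto hLt ?_
    filter_upwards [eventually_mem_nhdsWithin] with s hs'
    exact hball' s hs'
  have hLU : L.2.1 ∈ U := hKΩ hLK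
  -- z component of L
  have hzL : c * (s₂ - s₁) ≤ zc L := by
    set f : ℝ → ℝ := fun s => zc (γ s) + c * s with hfdef
    have hfd : ∀ s ∈ J, HasDerivAt f (Hpz a (γ s) + c) s := by
      intro s hs'
      have h1 : HasDerivAt (fun u => zcL (γ u)) (zcL (Hp a (γ s))) s :=
        zcL.hasFDerivAt.comp_hasDerivAt s (hder s hs')
      have h2 : HasDerivAt (fun u => c * u) c s := by
        simpa using (hasDerivAt_id s).const_mul c
      have := h1.add h2
      rw [zcL_Hp] at this
      exact this
    have hanti : AntitoneOn f J := by
      apply antitoneOn_of_deriv_nonpos (convex_Ioo s₁ s₂)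
      · intro s hs'
        exact ((hfd s hs').continuousAt).continuousWithinAt
      · intro s hs'
        rw [interior_Ioo] at hs'
        exact (hfd s hs').differentiableAt.differentiableWithinAt
      · intro s hs'
        rw [interior_Ioo] at hs'
        rw [(hfd s hs').deriv]
        have := hKHpz _ (hball' s hs')
        linarith
    have hkey : ∀ u ∈ J, zc (γ u) + c * u ≤ zc L + c * s₁ := by
      intro u huJ
      have htd : Tendsto f (𝓝[J] s₁) (𝓝 (zc L + c * s₁)) := by
        apply Tendsto.add
        · have : Tendsto (fun ϱ' : Phase d => zc ϱ') (𝓝 L) (𝓝 (zc L)) := by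
            have := zcL.continuous.tendsto L
            exact this
          exact this.comp hLt
        · exact ((continuous_const.mul continuous_id).tendsto s₁).comp
            (nhdsWithin_le_nhds (s := J))
      refine ge_of_tendsto htd ?_
      have hev1 : ∀ᶠ s in 𝓝[J] s₁, s < u :=
        mem_nhdsWithin_of_mem_nhds (Iio_mem_nhds huJ.1)
      filter_upwards [eventually_mem_nhdsWithin, hev1] with s hsJ hsu
      exact hanti hsJ huJ (le_of_lt hsu)
    have hfinal : ∀ u ∈ J, c * u ≤ zc L + c * s₁ := by
      intro u huJ
      have := hkey u huJ
      have hzpos : 0 < zc (γ u) := (hmem u huJ).2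
      linarith
    have htd2 : Tendsto (fun u => c * u) (𝓝[J] s₂) (𝓝 (c * s₂)) :=
      ((continuous_const.mul continuous_id).tendsto s₂).comp (nhdsWithin_le_nhds (s := J))
    have : c * s₂ ≤ zc L + c * s₁ := by
      refine le_of_tendsto htd2 ?_
      filter_upwards [eventually_mem_nhdsWithin] with u huJ
      exact hfinal u huJ
    linarith
  have hzLpos : 0 < zc L := lt_of_lt_of_le (mul_pos hc (by linarith)) hzL
  -- p vanishes at L
  have hpL : psymb a L = 0 := by
    have hcp : ContinuousAt (psymb a) L :=
      (contOn_psymb a hC1).continuousAt (hΩo.mem_nhds hLU)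
    have h1 : Tendsto (fun s => psymb a (γ s)) (𝓝[J] s₁) (𝓝 (psymb a L)) :=
      hcp.tendsto.comp hLt
    have h2 : Tendsto (fun s => psymb a (γ s)) (𝓝[J] s₁) (𝓝 0) := by
      refine Tendsto.congr' ?_ tendsto_const_nhds
      filter_upwards [eventually_mem_nhdsWithin] with s hs'
      exact (hp0 s hs').symm
    exact tendsto_nhds_unique h1 h2
  -- Step G : the extension γ'' and its derivative at s₁
  set γ'' : ℝ → Phase d := Function.update γ s₁ L with hγ''def
  have hupd : ∀ s ∈ J, γ'' s = γ s := fun s hs' =>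
    Function.update_of_ne (ne_of_gt hs'.1) _ _
  have hγ''s₁ : γ'' s₁ = L := Function.update_self _ _ _
  have hder'' : ∀ s ∈ J, HasDerivAt γ'' (Hp a (γ s)) s := by
    intro s hs'
    refine (hder s hs').congr_of_eventuallyEq ?_
    filter_upwards [isOpen_Ioo.mem_nhds hs'] with u hu
    exact hupd u hu
  have hdiff'' : DifferentiableOn ℝ γ'' J := fun s hs' =>
    (hder'' s hs').differentiableAt.differentiableWithinAt
  have hcw : ContinuousWithinAt γ'' J s₁ := by
    unfold ContinuousWithinAt
    rw [hγ''s₁]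
    refine Tendsto.congr' ?_ hLt
    filter_upwards [eventually_mem_nhdsWithin] with s hs'
    exact (hupd s hs').symm
  have hJm : J ∈ 𝓝[>] s₁ := by
    rw [hJdef]
    exact Ioo_mem_nhdsGT_of_mem ⟨le_rfl, hs⟩
  have hHpL : ContinuousAt (Hp a) L := (contOn_Hp a hC1 hU).continuousAt (hΩo.mem_nhds hLU)
  have hderivTends : Tendsto (fun x => deriv γ'' x) (𝓝[>] s₁) (𝓝 (Hp a L)) := by
    have h1 : Tendsto (fun s => Hp a (γ s)) (𝓝[J] s₁) (𝓝 (Hp a L)) :=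
      hHpL.tendsto.comp hLt
    rw [hJdef, nhdsWithin_Ioo_eq_nhdsGT hs] at h1
    refine Tendsto.congr' ?_ h1
    filter_upwards [hJm] with x hx
    exact ((hder'' x hx).deriv).symm
  have hend : HasDerivWithinAt γ'' (Hp a L) (Ico s₁ s₂) s₁ :=
    (hasDerivWithinAt_Ici_of_tendsto_deriv hdiff'' hcw hJm hderivTends).mono
      Ico_subset_Ici_self
  -- Step H : γ'' is a bicharacteristic on Ico s₁ s₂, contradicting maximality
  have hB : BicharOn a V γ'' (Ico s₁ s₂) := by
    refine ⟨ordConnected_Ico, fun s hs' => ?_⟩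
    rcases eq_or_lt_of_le hs'.1 with heq | hlt
    · subst heq
      rw [hγ''s₁]
      refine ⟨⟨hLU, hzLpos⟩, hpL, ?_⟩
      exact hend
    · have hsJ : s ∈ J := ⟨hlt, hs'.2⟩
      refine ⟨?_, ?_, ?_⟩
      · rw [hupd s hsJ]; exact hmem s hsJ
      · rw [hupd s hsJ]; exact hp0 s hsJ
      · rw [hupd s hsJ]
        exact (hder'' s hsJ).hasDerivWithinAt
  have hres := hmaximal γ'' (Ico s₁ s₂) hB Ioo_subset_Ico_self hupd
  have : s₁ ∈ Ico s₁ s₂ := left_mem_Ico.2 hs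
  rw [hres] at this
  exact lt_irrefl s₁ this.1


end AuxStmt7

theorem stmt7 (U : Set (Fin (d + 1) → ℝ)) (hU : IsOpen U) (hmet : MetricHyp a U)
    (ϱ0 : Phase d) (hx : ϱ0.2.1 ∈ U) (hH : ϱ0 ∈ Hminus a ∪ Hplus a) :
    ∃ S₀ > 0, ∃ W : Set (Phase d), IsOpen W ∧ ϱ0 ∈ W ∧
      (ϱ0 ∈ Hminus a → W ∩ CharSet a ∩ {ϱ | zc ϱ = 0} ⊆ Hminus a) ∧
      (ϱ0 ∈ Hplus a → W ∩ CharSet a ∩ {ϱ | zc ϱ = 0} ⊆ Hplus a) ∧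
      ∀ (γ : ℝ → Phase d) (s₁ s₂ : ℝ), s₁ < s₂ →
        MaxBicharOn a {ϱ | ϱ.2.1 ∈ U ∧ 0 < zc ϱ} γ (Set.Ioo s₁ s₂) →
        (ϱ0 ∈ Hminus a → ∀ ϱ : Phase d,
          Tendsto γ (𝓝[Set.Ioo s₁ s₂] s₂) (𝓝 ϱ) → ϱ ∈ W ∩ Hminus a → S₀ ≤ s₂ - s₁) ∧
        (ϱ0 ∈ Hplus a → ∀ ϱ : Phase d,
          Tendsto γ (𝓝[Set.Ioo s₁ s₂] s₁) (𝓝 ϱ) → ϱ ∈ W ∩ Hplus a → S₀ ≤ s₂ - s₁) := by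
  rcases hH with hm | hp
  · obtain ⟨S₀, hS₀, W, hWo, hW0, hWsub, hmain⟩ := core a hU hmet ϱ0 hx hm
    refine ⟨S₀, hS₀, W, hWo, hW0, ?_, ?_, ?_⟩
    · intro _ ϱ hϱ
      exact ⟨hϱ.2, hϱ.1.2, (hWsub hϱ.1.1).2⟩
    · exact fun hp' => ((lt_asymm hp'.2.2) ((hWsub hW0).2)).elim
    · intro γ s₁ s₂ hlt hmax
      exact ⟨fun _ ϱ ht hW => hmain γ s₁ s₂ hlt hmax ϱ ht hW,
        fun hp' => ((lt_asymm hp'.2.2) ((hWsub hW0).2)).elim⟩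
  · have hm' : sgm ϱ0 ∈ Hminus a := sgm_mem_Hminus a hp
    obtain ⟨S₀, hS₀, W, hWo, hW0', hWsub, hmain⟩ := core a hU hmet (sgm ϱ0) hx hm'
    have hWpos : ∀ ϱ ∈ sgm ⁻¹' W, 0 < Hpz a ϱ := by
      intro ϱ hϱ
      have h := (hWsub hϱ).2
      rw [Hpz_sgm] at h
      linarith
    refine ⟨S₀, hS₀, sgm ⁻¹' W, hWo.preimage continuous_sgm, hW0', ?_, ?_, ?_⟩
    · exact fun hm'' => ((lt_asymm hp.2.2) hm''.2.2).elim
    · intro _ ϱ hϱ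
      exact ⟨hϱ.2, hϱ.1.2, hWpos ϱ hϱ.1.1⟩
    · intro γ s₁ s₂ hlt hmax
      refine ⟨fun hm'' => ((lt_asymm hp.2.2) hm''.2.2).elim, fun _ ϱ ht hW => ?_⟩
      have hVσ : ∀ ϱ' ∈ {ϱ' : Phase d | ϱ'.2.1 ∈ U ∧ 0 < zc ϱ'}, sgm ϱ' ∈
          {ϱ' : Phase d | ϱ'.2.1 ∈ U ∧ 0 < zc ϱ'} := fun ϱ' h => ⟨h.1, h.2⟩
      have hmax' := maxbichar_refl a hVσ hmax
      have hrefl : Tendsto (fun s => (s₁ + s₂) - s) (𝓝[Set.Ioo s₁ s₂] s₂)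
          (𝓝[Set.Ioo s₁ s₂] s₁) := by
        have hcw : ContinuousWithinAt (fun s => (s₁ + s₂) - s) (Set.Ioo s₁ s₂) s₂ :=
          (continuous_const.sub continuous_id).continuousWithinAt
        have hmt : MapsTo (fun s => (s₁ + s₂) - s) (Set.Ioo s₁ s₂) (Set.Ioo s₁ s₂) := by
          intro u hu
          rw [Set.mem_Ioo] at hu
          show s₁ + s₂ - u ∈ Set.Ioo s₁ s₂
          rw [Set.mem_Ioo]
          exact ⟨by linarith [hu.2], by linarith [hu.1]⟩
        have h2 := hcw.tendsto_nhdsWithin hmt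
        rwa [show (s₁ + s₂) - s₂ = s₁ by ring] at h2
      have ht' : Tendsto (fun s => sgm (γ ((s₁ + s₂) - s))) (𝓝[Set.Ioo s₁ s₂] s₂)
          (𝓝 (sgm ϱ)) := (continuous_sgm.tendsto ϱ).comp (ht.comp hrefl)
      exact hmain _ s₁ s₂ hlt hmax' (sgm ϱ) ht' ⟨hW.1, sgm_mem_Hminus a hW.2⟩
end
end

section
/- In the quasi-normal local model, suppose (μ, ν, f) satisfy the boundary transport equation and μ satisfies the standing support assumptions. Let ϱ ∈ H_∂⁺ ∪ H_∂⁻ be a hyperbolic boundary point with ϱ ∈ 𝒰 and Σ(ϱ) ∈ 𝒰. Then ϱ ∈ supp μ if and only if Σ(ϱ) ∈ supp μ. -/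
open MeasureTheory Filter Topology Set

noncomputable section

variable {d : ℕ}

variable (a : (Fin (d + 1) → ℝ) → Fin (d + 1) → Fin (d + 1) → ℝ)

/-! ### Auxiliary lemmas -/

/-- squared positive part -/
def pos2 (t : ℝ) : ℝ := (max t 0) ^ 2

lemma pos2_nonneg (t : ℝ) : 0 ≤ pos2 t := sq_nonneg _

lemma pos2_of_nonpos {t : ℝ} (h : t ≤ 0) : pos2 t = 0 := by
  simp [pos2, max_eq_right h]

lemma pos2_pos {t : ℝ} (h : 0 < t) : 0 < pos2 t := by
  have : max t 0 = t := max_eq_left h.le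
  simp [pos2, this]; positivity

lemma pos2_le_sq {t c : ℝ} (h : t ≤ c) (hc : 0 ≤ c) : pos2 t ≤ c ^ 2 := by
  have h1 : max t 0 ≤ c := max_le h hc
  have h0 : (0:ℝ) ≤ max t 0 := le_max_right _ _
  calc (max t 0)^2 ≤ c ^ 2 := by nlinarith

lemma hasDerivAt_pos2 (t : ℝ) : HasDerivAt pos2 (2 * max t 0) t := by
  rcases lt_trichotomy t 0 with ht | ht | ht
  · have h1 : HasDerivAt (fun _ : ℝ => (0:ℝ)) (2 * max t 0) t := by
      simpa [max_eq_right ht.le] using (hasDerivAt_const t (0:ℝ))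
    refine h1.congr_of_eventuallyEq ?_
    filter_upwards [eventually_lt_nhds ht] with s hs
    simp [pos2, max_eq_right hs.le]
  · subst ht
    have : HasDerivAt pos2 0 0 := by
      rw [hasDerivAt_iff_isLittleO]
      rw [Asymptotics.isLittleO_iff]
      intro c hc
      have hb : ∀ᶠ x : ℝ in 𝓝 (0:ℝ), |x| ≤ c := by
        have := Metric.ball_mem_nhds (0:ℝ) hc
        filter_upwards [this] with x hx
        have : |x| < c := by simpa [Real.dist_eq] using hx
        exact this.le
      filter_upwards [hb] with x hx
      have h1 : ‖pos2 x - pos2 0 - (x - 0) • (0:ℝ)‖ = (max x 0)^2 := by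
        have : pos2 (0:ℝ) = 0 := by simp [pos2]
        rw [this]
        simp only [smul_zero, sub_zero, Real.norm_eq_abs]
        exact abs_of_nonneg (pos2_nonneg x)
      rw [h1]
      have h2 : (max x 0)^2 ≤ |x| * |x| := by
        rcases le_or_gt x 0 with h | h
        · rw [max_eq_right h]; nlinarith [abs_nonneg x]
        · rw [max_eq_left h.le, abs_of_pos h]; nlinarith
      calc (max x 0)^2 ≤ |x| * |x| := h2
        _ ≤ c * |x| := by nlinarith [abs_nonneg x]
        _ = c * ‖x - 0‖ := by rw [sub_zero, Real.norm_eq_abs]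
    simpa using this
  · have h1 : HasDerivAt (fun s : ℝ => s ^ 2) (2 * max t 0) t := by
      simpa [max_eq_left ht.le, mul_comm] using (hasDerivAt_pow 2 t)
    refine h1.congr_of_eventuallyEq ?_
    filter_upwards [eventually_gt_nhds ht] with s hs
    simp [pos2, max_eq_left hs.le]

lemma deriv_pos2 : deriv pos2 = fun t => 2 * max t 0 := by
  funext t; exact (hasDerivAt_pos2 t).deriv

lemma contDiff_pos2 : ContDiff ℝ 1 pos2 := by
  rw [contDiff_one_iff_deriv]
  refine ⟨fun t => (hasDerivAt_pos2 t).differentiableAt, ?_⟩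
  rw [deriv_pos2]
  exact continuous_const.mul (continuous_id.max continuous_const)

/-- Euclidean-type squared distance on phase space. -/
def eC (c p : Phase d) : ℝ :=
  (p.1 - c.1)^2 + (∑ i, (p.2.1 i - c.2.1 i)^2) + (p.2.2.1 - c.2.2.1)^2 +
    (∑ i, (p.2.2.2 i - c.2.2.2 i)^2)

lemma eC_nonneg (c p : Phase d) : 0 ≤ eC c p := by
  have h1 : (0:ℝ) ≤ ∑ i, (p.2.1 i - c.2.1 i)^2 :=
    Finset.sum_nonneg fun i _ => sq_nonneg _
  have h2 : (0:ℝ) ≤ ∑ i, (p.2.2.2 i - c.2.2.2 i)^2 :=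
    Finset.sum_nonneg fun i _ => sq_nonneg _
  have := sq_nonneg (p.1 - c.1); have := sq_nonneg (p.2.2.1 - c.2.2.1)
  unfold eC; linarith

lemma contDiff_eC (c : Phase d) : ContDiff ℝ 1 (eC c) := by
  have hx : ContDiff ℝ 1 (fun p : Phase d => p.2.1) := contDiff_fst.comp contDiff_snd
  have hτ : ContDiff ℝ 1 (fun p : Phase d => p.2.2.1) :=
    contDiff_fst.comp (contDiff_snd.comp contDiff_snd)
  have hξ : ContDiff ℝ 1 (fun p : Phase d => p.2.2.2) :=
    contDiff_snd.comp (contDiff_snd.comp contDiff_snd)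
  have e1 : ContDiff ℝ 1 (fun p : Phase d => (p.1 - c.1)^2) :=
    (contDiff_fst.sub contDiff_const).pow 2
  have e2 : ContDiff ℝ 1 (fun p : Phase d => ∑ i, (p.2.1 i - c.2.1 i)^2) := by
    apply ContDiff.sum; intro i _
    exact (((ContinuousLinearMap.proj (R := ℝ) (φ := fun _ : Fin (d+1) => ℝ) i).contDiff).comp
      hx |>.sub contDiff_const).pow 2
  have e3 : ContDiff ℝ 1 (fun p : Phase d => (p.2.2.1 - c.2.2.1)^2) :=
    (hτ.sub contDiff_const).pow 2
  have e4 : ContDiff ℝ 1 (fun p : Phase d => ∑ i, (p.2.2.2 i - c.2.2.2 i)^2) := by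
    apply ContDiff.sum; intro i _
    exact (((ContinuousLinearMap.proj (R := ℝ) (φ := fun _ : Fin (d+1) => ℝ) i).contDiff).comp
      hξ |>.sub contDiff_const).pow 2
  exact ((e1.add e2).add e3).add e4

lemma abs_le_of_sq_le {a r : ℝ} (hr : 0 ≤ r) (h : a^2 ≤ r^2) : |a| ≤ r := by
  nlinarith [abs_nonneg a, sq_abs a]

lemma sq_t_le_eC (c p : Phase d) : (p.1 - c.1)^2 ≤ eC c p := by
  have h1 : (0:ℝ) ≤ ∑ i, (p.2.1 i - c.2.1 i)^2 :=
    Finset.sum_nonneg fun i _ => sq_nonneg _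
  have h2 : (0:ℝ) ≤ ∑ i, (p.2.2.2 i - c.2.2.2 i)^2 :=
    Finset.sum_nonneg fun i _ => sq_nonneg _
  have := sq_nonneg (p.2.2.1 - c.2.2.1); unfold eC; linarith

lemma sq_x_le_eC (c p : Phase d) (i : Fin (d+1)) : (p.2.1 i - c.2.1 i)^2 ≤ eC c p := by
  have h1 : (p.2.1 i - c.2.1 i)^2 ≤ ∑ j, (p.2.1 j - c.2.1 j)^2 :=
    Finset.single_le_sum (f := fun j => (p.2.1 j - c.2.1 j)^2)
      (fun j _ => sq_nonneg _) (Finset.mem_univ i)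
  have h2 : (0:ℝ) ≤ ∑ j, (p.2.2.2 j - c.2.2.2 j)^2 :=
    Finset.sum_nonneg fun j _ => sq_nonneg _
  have := sq_nonneg (p.1 - c.1); have := sq_nonneg (p.2.2.1 - c.2.2.1)
  unfold eC; linarith

lemma sq_τ_le_eC (c p : Phase d) : (p.2.2.1 - c.2.2.1)^2 ≤ eC c p := by
  have h1 : (0:ℝ) ≤ ∑ i, (p.2.1 i - c.2.1 i)^2 :=
    Finset.sum_nonneg fun i _ => sq_nonneg _
  have h2 : (0:ℝ) ≤ ∑ i, (p.2.2.2 i - c.2.2.2 i)^2 :=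
    Finset.sum_nonneg fun i _ => sq_nonneg _
  have := sq_nonneg (p.1 - c.1); unfold eC; linarith

lemma sq_ξ_le_eC (c p : Phase d) (i : Fin (d+1)) : (p.2.2.2 i - c.2.2.2 i)^2 ≤ eC c p := by
  have h1 : (p.2.2.2 i - c.2.2.2 i)^2 ≤ ∑ j, (p.2.2.2 j - c.2.2.2 j)^2 :=
    Finset.single_le_sum (f := fun j => (p.2.2.2 j - c.2.2.2 j)^2)
      (fun j _ => sq_nonneg _) (Finset.mem_univ i)
  have h2 : (0:ℝ) ≤ ∑ j, (p.2.1 j - c.2.1 j)^2 :=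
    Finset.sum_nonneg fun j _ => sq_nonneg _
  have := sq_nonneg (p.1 - c.1); have := sq_nonneg (p.2.2.1 - c.2.2.1)
  unfold eC; linarith

lemma dist_le_of_eC_le {c p : Phase d} {r : ℝ} (hr : 0 ≤ r) (h : eC c p ≤ r^2) :
    dist p c ≤ r := by
  rw [Prod.dist_eq]
  refine max_le ?_ ?_
  · rw [Real.dist_eq]; exact abs_le_of_sq_le hr (le_trans (sq_t_le_eC c p) h)
  rw [Prod.dist_eq]
  refine max_le ?_ ?_
  · rw [dist_pi_le_iff hr]
    intro i
    rw [Real.dist_eq]; exact abs_le_of_sq_le hr (le_trans (sq_x_le_eC c p i) h)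
  rw [Prod.dist_eq]
  refine max_le ?_ ?_
  · rw [Real.dist_eq]; exact abs_le_of_sq_le hr (le_trans (sq_τ_le_eC c p) h)
  · rw [dist_pi_le_iff hr]
    intro i
    rw [Real.dist_eq]; exact abs_le_of_sq_le hr (le_trans (sq_ξ_le_eC c p i) h)

/-- Flip of the last `ξ`-coordinate as a linear map. -/
def negLastL : (Fin (d+1) → ℝ) →ₗ[ℝ] (Fin (d+1) → ℝ) where
  toFun ξ := Function.update ξ (Fin.last d) (-ξ (Fin.last d))
  map_add' x y := by
    funext i
    by_cases h : i = Fin.last d <;> simp [Function.update_apply, h] <;> ring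
  map_smul' r x := by
    funext i
    by_cases h : i = Fin.last d <;> simp [Function.update_apply, h]

/-- The reflection as a continuous linear map. -/
def Lc : Phase d →L[ℝ] Phase d :=
  (ContinuousLinearMap.id ℝ ℝ).prodMap
    ((ContinuousLinearMap.id ℝ (Fin (d+1) → ℝ)).prodMap
      ((ContinuousLinearMap.id ℝ ℝ).prodMap (LinearMap.toContinuousLinearMap negLastL)))

lemma Lc_apply (p : Phase d) : Lc p = reflζ p := rfl

lemma Lc_invol (p : Phase d) : Lc (Lc p) = p := by
  show reflζ (reflζ p) = p
  unfold reflζ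
  simp only
  refine Prod.ext rfl (Prod.ext rfl (Prod.ext rfl ?_))
  funext i
  by_cases h : i = Fin.last d <;> simp [Function.update_apply, h]

lemma eC_Lc (c p : Phase d) : eC c (Lc p) = eC (Lc c) p := by
  show eC c (reflζ p) = eC (reflζ c) p
  unfold eC reflζ
  simp only
  have : ∑ i, (Function.update p.2.2.2 (Fin.last d) (-p.2.2.2 (Fin.last d)) i - c.2.2.2 i)^2
      = ∑ i, (p.2.2.2 i - Function.update c.2.2.2 (Fin.last d) (-c.2.2.2 (Fin.last d)) i)^2 := by
    apply Finset.sum_congr rfl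
    intro i _
    by_cases h : i = Fin.last d <;> simp [Function.update_apply, h] <;> ring
  rw [this]

lemma zc_Lc (p : Phase d) : zc (Lc p) = zc p := rfl

lemma x_Lc (p : Phase d) : (Lc p).2.1 = p.2.1 := rfl

lemma Lc_eζ : Lc (eζ d) = -(eζ d) := by
  show reflζ (eζ d) = -(eζ d)
  unfold reflζ eζ
  refine Prod.ext (by simp) (Prod.ext (by simp) (Prod.ext (by simp) ?_))
  simp only [Prod.snd]
  funext i
  by_cases h : i = Fin.last d <;>
    simp [Function.update_apply, h, Pi.single_apply]

lemma Lc_liftB (q' : BPhase d) (w : ℝ) : Lc (liftB q' w) = liftB q' (-w) := by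
  show reflζ (liftB q' w) = liftB q' (-w)
  unfold reflζ liftB
  refine Prod.ext rfl (Prod.ext rfl (Prod.ext rfl ?_))
  simp only
  funext i
  refine Fin.lastCases ?_ (fun j => ?_) i
  · simp [Fin.snoc_last]
  · have hne : (Fin.castSucc j) ≠ Fin.last d := Fin.castSucc_lt_last j |>.ne
    simp [Function.update_apply, hne, Fin.snoc_castSucc]

lemma msupp_compl_null {α : Type*} [TopologicalSpace α] [SecondCountableTopology α]
    [MeasurableSpace α] (μ : Measure α) : μ (msupp μ)ᶜ = 0 := by
  obtain ⟨T, hTc, hTS, hTU⟩ :=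
    TopologicalSpace.isOpen_sUnion_countable {O : Set α | IsOpen O ∧ μ O = 0}
      (fun s hs => hs.1)
  have h0 : μ (⋃₀ {O : Set α | IsOpen O ∧ μ O = 0}) = 0 := by
    rw [← hTU, sUnion_eq_biUnion]
    exact (measure_biUnion_null_iff hTc).2 (fun s hs => (hTS hs).2)
  refine measure_mono_null ?_ h0
  intro x hx
  simp only [mem_compl_iff, msupp, mem_setOf_eq] at hx
  push_neg at hx
  obtain ⟨O, hO, hxO, hμO⟩ := hx
  exact ⟨O, ⟨hO, le_zero_iff.mp hμO⟩, hxO⟩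

lemma ae_mem_msupp {α : Type*} [TopologicalSpace α] [SecondCountableTopology α]
    [MeasurableSpace α] (μ : Measure α) : ∀ᵐ x ∂μ, x ∈ msupp μ := by
  rw [MeasureTheory.ae_iff]
  exact msupp_compl_null μ

lemma not_msupp_iff {α : Type*} [TopologicalSpace α] [MeasurableSpace α]
    (μ : Measure α) (x : α) : x ∉ msupp μ ↔ ∃ O : Set α, IsOpen O ∧ x ∈ O ∧ μ O = 0 := by
  simp only [msupp, mem_setOf_eq, not_forall]
  constructor
  · rintro ⟨O, hO, hx, h⟩
    exact ⟨O, hO, hx, le_zero_iff.mp (not_lt.mp h)⟩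
  · rintro ⟨O, hO, hx, h⟩
    exact ⟨O, hO, hx, by simp [h]⟩

/-- On the boundary in quasi-normal coordinates, `H_p z = 2ζ`. -/
lemma Hpz_eq_boundary {U : Set (Fin (d + 1) → ℝ)} (hqn : QuasiNormal a U)
    (p : Phase d) (hx : p.2.1 ∈ U) (hz : zc p = 0) :
    Hpz a p = 2 * p.2.2.2 (Fin.last d) := by
  obtain ⟨h1, h2⟩ := hqn p.2.1 hx hz
  unfold Hpz
  congr 1
  rw [Finset.sum_eq_single (Fin.last d)]
  · rw [h2, one_mul]
  · intro j _ hj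
    rw [h1 j hj, zero_mul]
  · intro h; exact absurd (Finset.mem_univ _) h

lemma Hpz_Lc_boundary {U : Set (Fin (d + 1) → ℝ)} (hqn : QuasiNormal a U)
    (p : Phase d) (hx : p.2.1 ∈ U) (hz : zc p = 0) :
    Hpz a (Lc p) = -Hpz a p := by
  have h1 := Hpz_eq_boundary a hqn p hx hz
  have h2 := Hpz_eq_boundary a hqn (Lc p) hx hz
  rw [h2, h1]
  show 2 * (reflζ p).2.2.2 (Fin.last d) = -(2 * p.2.2.2 (Fin.last d))
  unfold reflζ
  simp

/-- `qf · ξ` as a linear map in the matrix argument. -/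
def qfL (ξ : Fin (d+1) → ℝ) : (Fin (d+1) → Fin (d+1) → ℝ) →ₗ[ℝ] ℝ where
  toFun A := qf A ξ
  map_add' A B := by
    unfold qf
    rw [← Finset.sum_add_distrib]
    apply Finset.sum_congr rfl; intro i _
    rw [← Finset.sum_add_distrib]
    apply Finset.sum_congr rfl; intro j _
    simp [add_mul]
  map_smul' r A := by
    unfold qf
    simp only [smul_eq_mul, RingHom.id_apply, Finset.mul_sum]
    apply Finset.sum_congr rfl; intro i _
    apply Finset.sum_congr rfl; intro j _
    simp [Pi.smul_apply, smul_eq_mul]; ring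

/-- continuous version -/
def qfCL (ξ : Fin (d+1) → ℝ) : (Fin (d+1) → Fin (d+1) → ℝ) →L[ℝ] ℝ :=
  LinearMap.toContinuousLinearMap (qfL ξ)

lemma fderiv_qf_eq {U : Set (Fin (d + 1) → ℝ)} (hU : IsOpen U)
    (ha : ContDiffOn ℝ 1 a U) {x : Fin (d+1) → ℝ} (hx : x ∈ U) (ξ : Fin (d+1) → ℝ) :
    fderiv ℝ (fun y => qf (a y) ξ) x = (qfCL ξ).comp (fderiv ℝ a x) := by
  have hdiff : DifferentiableAt ℝ a x :=
    (ha.differentiableOn one_ne_zero).differentiableAt (hU.mem_nhds hx)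
  have h1 : (fun y => qf (a y) ξ) = (fun A => (qfCL ξ) A) ∘ a := rfl
  rw [h1, fderiv_comp x (qfCL ξ).differentiableAt hdiff, (qfCL ξ).fderiv]

lemma continuousOn_aent {U : Set (Fin (d + 1) → ℝ)} (ha : ContDiffOn ℝ 1 a U)
    (i j : Fin (d+1)) :
    ContinuousOn (fun p : Phase d => a p.2.1 i j) {p : Phase d | p.2.1 ∈ U} := by
  have h1 : ContinuousOn (fun p : Phase d => a p.2.1) {p : Phase d | p.2.1 ∈ U} :=
    ha.continuousOn.comp (continuous_fst.comp continuous_snd).continuousOn (fun p hp => hp)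
  exact ((continuous_apply j).comp (continuous_apply i)).comp_continuousOn h1

lemma continuousOn_Hpz {U : Set (Fin (d + 1) → ℝ)} (ha : ContDiffOn ℝ 1 a U) :
    ContinuousOn (Hpz a) {p : Phase d | p.2.1 ∈ U} := by
  unfold Hpz
  apply ContinuousOn.mul continuousOn_const
  apply continuousOn_finset_sum
  intro j _
  exact (continuousOn_aent a ha _ j).mul
    ((continuous_apply j).comp (continuous_snd.comp (continuous_snd.comp continuous_snd))).continuousOn

lemma continuousOn_Hp {U : Set (Fin (d + 1) → ℝ)} (hU : IsOpen U)
    (ha : ContDiffOn ℝ 1 a U) :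
    ContinuousOn (Hp a) {p : Phase d | p.2.1 ∈ U} := by
  set S := {p : Phase d | p.2.1 ∈ U} with hS
  have hξc : ∀ j, Continuous (fun p : Phase d => p.2.2.2 j) := fun j =>
    (continuous_apply j).comp (continuous_snd.comp (continuous_snd.comp continuous_snd))
  have hfc : ContinuousOn (fun p : Phase d => fderiv ℝ a p.2.1) S := by
    have := ha.continuousOn_fderiv_of_isOpen hU le_rfl
    exact this.comp (continuous_fst.comp continuous_snd).continuousOn (fun p hp => hp)
  refine ContinuousOn.prodMk ?_ (ContinuousOn.prodMk ?_ (ContinuousOn.prodMk ?_ ?_))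
  · exact (continuous_neg.comp ((continuous_const.mul
      (continuous_fst.comp (continuous_snd.comp continuous_snd))))).continuousOn
  · apply continuousOn_pi.2
    intro i
    apply ContinuousOn.mul continuousOn_const
    apply continuousOn_finset_sum
    intro j _
    exact (continuousOn_aent a ha i j).mul (hξc j).continuousOn
  · exact continuousOn_const
  · apply continuousOn_pi.2
    intro k
    have heq : ∀ p ∈ S,
        -(fderiv ℝ (fun y => qf (a y) p.2.2.2) p.2.1 (Pi.single k 1)) =
        -(qf (fderiv ℝ a p.2.1 (Pi.single k 1)) p.2.2.2) := by
      intro p hp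
      rw [fderiv_qf_eq a hU ha hp p.2.2.2]
      rfl
    refine ContinuousOn.congr ?_ heq
    apply ContinuousOn.neg
    have hM : ContinuousOn (fun p : Phase d => fderiv ℝ a p.2.1 (Pi.single k 1)) S := by
      exact (ContinuousLinearMap.apply ℝ (Fin (d+1) → Fin (d+1) → ℝ)
        (Pi.single k 1)).continuous.comp_continuousOn hfc
    unfold qf
    apply continuousOn_finset_sum; intro i _
    apply continuousOn_finset_sum; intro j _
    have hMi : ContinuousOn (fun p : Phase d => fderiv ℝ a p.2.1 (Pi.single k 1) i) S :=
      (continuous_apply i).comp_continuousOn hM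
    have hij : ContinuousOn (fun p : Phase d => fderiv ℝ a p.2.1 (Pi.single k 1) i j) S :=
      (continuous_apply j).comp_continuousOn hMi
    exact (hij.mul (hξc i).continuousOn).mul (hξc j).continuousOn

lemma continuous_of_contOn_supp {𝒰 : Set (Phase d)} (h𝒰 : IsOpen 𝒰)
    {φ : Phase d → ℝ} {K : Set (Phase d)} (hK : IsCompact K) (hKU : K ⊆ 𝒰)
    (hcont : ContinuousOn φ 𝒰) (hsupp : ∀ x ∉ K, φ x = 0) : Continuous φ := by
  rw [continuous_iff_continuousAt]; intro x
  by_cases hx : x ∈ 𝒰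
  · exact hcont.continuousAt (h𝒰.mem_nhds hx)
  · have hxK : x ∉ K := fun h => hx (hKU h)
    have hev : φ =ᶠ[𝓝 x] fun _ => (0:ℝ) := by
      filter_upwards [hK.isClosed.isOpen_compl.mem_nhds hxK] with y hy using hsupp y hy
    exact continuousAt_const.congr hev.symm

lemma integrable_of_contOn_supp {𝒰 : Set (Phase d)} (h𝒰 : IsOpen 𝒰)
    {μ : Measure (Phase d)} (hμ : RadonOn 𝒰 μ) {φ : Phase d → ℝ}
    {K : Set (Phase d)} (hK : IsCompact K) (hKU : K ⊆ 𝒰)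
    (hcont : ContinuousOn φ 𝒰) (hsupp : ∀ x ∉ K, φ x = 0) : Integrable φ μ := by
  have hφc : Continuous φ := continuous_of_contOn_supp h𝒰 hK hKU hcont hsupp
  obtain ⟨M, hM⟩ := hK.exists_bound_of_continuousOn hφc.continuousOn
  refine Integrable.mono' (g := K.indicator fun _ => M) ?_ hφc.aestronglyMeasurable ?_
  · rw [integrable_indicator_iff hK.isClosed.measurableSet]
    exact integrableOn_const (hμ.2 K hK hKU).ne
  · apply Filter.Eventually.of_forall
    intro x
    by_cases hx : x ∈ K
    · rw [indicator_of_mem hx]; exact hM x hx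
    · rw [indicator_of_notMem hx, hsupp x hx]; simp

set_option maxHeartbeats 2000000 in
lemma main_aux {d : ℕ} (a : (Fin (d + 1) → ℝ) → Fin (d + 1) → Fin (d + 1) → ℝ)
    (U : Set (Fin (d + 1) → ℝ)) (hU : IsOpen U) (ha : ContDiffOn ℝ 1 a U)
    (𝒰 : Set (Phase d)) (h𝒰 : IsOpen 𝒰) (h𝒰U : 𝒰 ⊆ {p : Phase d | p.2.1 ∈ U})
    (f : Phase d → ℝ) (hf : ContinuousOn f 𝒰)
    (μ : Measure (Phase d)) (ν : Measure (BPhase d)) (hμ : RadonOn 𝒰 μ)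
    (hbte : BTE a 𝒰 μ ν f) (hstand : StandingSupp a μ)
    (p₁ : Phase d) (h1 : p₁ ∈ 𝒰) (h2 : Lc p₁ ∈ 𝒰) (h3 : zc p₁ = 0)
    (h4 : Hpz a p₁ ≠ 0) (h5 : Lc p₁ ∉ msupp μ) : p₁ ∉ msupp μ := by
  classical
  obtain ⟨O, hOopen, hOmem, hOnull⟩ := (not_msupp_iff μ (Lc p₁)).1 h5
  set s : ℝ := Hpz a p₁ with hs_def
  have hs : 0 < |s| := abs_pos.2 h4
  set σ : ℝ := if 0 < s then 1 else -1 with hσ_def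
  have hσs : σ * s = |s| := by
    rcases lt_trichotomy s 0 with h | h | h
    · rw [hσ_def, if_neg (by linarith), abs_of_neg h]; ring
    · exact absurd h h4
    · rw [hσ_def, if_pos h, abs_of_pos h]; ring
  have hσabs : |σ| = 1 := by
    rw [hσ_def]; split_ifs <;> simp
  -- the open set where Hpz is close to s
  set S : Set (Phase d) := {p : Phase d | p.2.1 ∈ U} with hS_def
  have hSopen : IsOpen S := hU.preimage (continuous_fst.comp continuous_snd)
  have hW₁open : IsOpen (S ∩ (Hpz a) ⁻¹' Metric.ball s (|s|/4)) :=
    (continuousOn_Hpz a ha).isOpen_inter_preimage hSopen Metric.isOpen_ball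
  have hp₁W₁ : p₁ ∈ 𝒰 ∩ (S ∩ (Hpz a) ⁻¹' Metric.ball s (|s|/4)) := by
    refine ⟨h1, h𝒰U h1, ?_⟩
    simp only [mem_preimage, Metric.mem_ball, dist_self]
    show dist s s < |s|/4; rw [dist_self]; linarith
  have hLW₂ : Lc p₁ ∈ 𝒰 ∩ O := ⟨h2, hOmem⟩
  obtain ⟨ε₁, hε₁, hball₁⟩ := Metric.isOpen_iff.1 (h𝒰.inter hW₁open) p₁ hp₁W₁
  obtain ⟨ε₂, hε₂, hball₂⟩ := Metric.isOpen_iff.1 (h𝒰.inter hOopen) (Lc p₁) hLW₂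
  set ρ : ℝ := min ε₁ ε₂ / 2 with hρ_def
  have hρ : 0 < ρ := by positivity
  set Kb : Set (Phase d) := {p : Phase d | eC p₁ p ≤ ρ^2} with hKb_def
  set T : Set (Phase d) := {p : Phase d | eC (Lc p₁) p ≤ ρ^2} with hT_def
  have heCc : ∀ c : Phase d, Continuous (eC c) := fun c => (contDiff_eC c).continuous
  have hKbclosed : IsClosed Kb := isClosed_le (heCc p₁) continuous_const
  have hTclosed : IsClosed T := isClosed_le (heCc (Lc p₁)) continuous_const
  have hKbW : Kb ⊆ Metric.ball p₁ ε₁ := by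
    intro p hp
    have := dist_le_of_eC_le hρ.le hp
    have hρε : ρ < ε₁ := by
      have : min ε₁ ε₂ ≤ ε₁ := min_le_left _ _
      rw [hρ_def]; linarith
    exact lt_of_le_of_lt this hρε
  have hTW : T ⊆ Metric.ball (Lc p₁) ε₂ := by
    intro p hp
    have := dist_le_of_eC_le hρ.le hp
    have hρε : ρ < ε₂ := by
      have : min ε₁ ε₂ ≤ ε₂ := min_le_right _ _
      rw [hρ_def]; linarith
    exact lt_of_le_of_lt this hρε
  have hKb𝒰 : Kb ⊆ 𝒰 := fun p hp => ((hball₁ (hKbW hp)).1)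
  have hKbS : Kb ⊆ S := fun p hp => ((hball₁ (hKbW hp)).2).1
  have hKbHpz : ∀ p ∈ Kb, |Hpz a p - s| < |s|/4 := by
    intro p hp
    have := ((hball₁ (hKbW hp)).2).2
    simpa [Real.dist_eq] using this
  have hT𝒰 : T ⊆ 𝒰 := fun p hp => (hball₂ (hTW hp)).1
  have hTO : T ⊆ O := fun p hp => (hball₂ (hTW hp)).2
  have hKbcomp : IsCompact Kb := by
    refine (isCompact_closedBall p₁ ρ).of_isClosed_subset hKbclosed ?_
    intro p hp
    exact Metric.mem_closedBall.2 (dist_le_of_eC_le hρ.le hp)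
  have hTcomp : IsCompact T := by
    refine (isCompact_closedBall (Lc p₁) ρ).of_isClosed_subset hTclosed ?_
    intro p hp
    exact Metric.mem_closedBall.2 (dist_le_of_eC_le hρ.le hp)
  -- constants
  set c₁ : ℝ := ρ^2/8 with hc₁_def
  have hc₁ : 0 < c₁ := by positivity
  obtain ⟨F₀, hF₀⟩ := hKbcomp.exists_bound_of_continuousOn (hf.mono hKb𝒰)
  set F : ℝ := max F₀ 0 with hF_def
  have hFnn : 0 ≤ F := le_max_right _ _
  have hFb : ∀ p ∈ Kb, |f p| ≤ F := fun p hp =>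
    le_trans (by simpa [Real.norm_eq_abs] using hF₀ p hp) (le_max_left _ _)
  have hmcont : ContinuousOn (fun p : Phase d => fderiv ℝ (eC p₁) p (Hp a p)) S := by
    refine ContinuousOn.clm_apply ?_ (continuousOn_Hp a hU ha)
    exact ((contDiff_eC p₁).continuous_fderiv one_ne_zero).continuousOn
  obtain ⟨M₀, hM₀⟩ := hKbcomp.exists_bound_of_continuousOn (hmcont.mono hKbS)
  set M : ℝ := max M₀ 0 with hM_def
  have hMnn : 0 ≤ M := le_max_right _ _
  have hMb : ∀ p ∈ Kb, |fderiv ℝ (eC p₁) p (Hp a p)| ≤ M := fun p hp =>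
    le_trans (by simpa [Real.norm_eq_abs] using hM₀ p hp) (le_max_left _ _)
  set C : ℝ := 1 + F * c₁^2 + 4 * c₁ * M with hC_def
  have hC : 0 < C := by positivity
  set κ : ℝ := |s| / (8 * C) with hκ_def
  have hκ : 0 < κ := by positivity
  have hκC : κ * C = |s|/8 := by
    rw [hκ_def]; field_simp
  have hkey1 : F * (κ * c₁^2) ≤ |s|/8 := by
    have h1 : F * c₁^2 ≤ C := by rw [hC_def]; nlinarith
    calc F * (κ * c₁^2) = κ * (F * c₁^2) := by ring
      _ ≤ κ * C := by nlinarith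
      _ = |s|/8 := hκC
  have hkey2 : κ * (2*c₁) * M ≤ |s|/8 := by
    have h1 : 2*c₁*M ≤ C := by rw [hC_def]; nlinarith
    calc κ * (2*c₁) * M = κ * (2*c₁*M) := by ring
      _ ≤ κ * C := by nlinarith
      _ = |s|/8 := hκC
  -- test functions
  set β : ℝ → ℝ := fun y => Real.smoothTransition ((ρ^2/2 - y)/(ρ^2/4)) with hβ_def
  have hβcd : ContDiff ℝ 1 β :=
    Real.smoothTransition.contDiff.comp ((contDiff_const.sub contDiff_id).div_const _)
  have hβ1 : ∀ y ≤ ρ^2/4, β y = 1 := by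
    intro y hy
    apply Real.smoothTransition.one_of_one_le
    rw [le_div_iff₀ (by positivity)]; linarith
  have hβ0 : ∀ y, ρ^2/2 ≤ y → β y = 0 := by
    intro y hy
    apply Real.smoothTransition.zero_of_nonpos
    apply div_nonpos_of_nonpos_of_nonneg _ (by positivity)
    linarith
  set Θ : Phase d → ℝ := fun p => β (eC p₁ p) with hΘ_def
  set ψ : Phase d → ℝ := fun p => κ * pos2 (c₁ - eC p₁ p) with hψ_def
  set w : Phase d → ℝ := fun p => ψ p - zc p with hw_def
  set v : Phase d → ℝ := fun p => pos2 (w p) with hv_def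
  set q : Phase d → ℝ := fun p => Θ p * v p with hq_def
  set u : Phase d → ℝ := fun p => max (w p) 0 with hu_def
  have hzc_cd : ContDiff ℝ 1 (zc : Phase d → ℝ) := by
    have h1 : ContDiff ℝ 1 (fun p : Phase d => p.2.1) := contDiff_fst.comp contDiff_snd
    exact ((ContinuousLinearMap.proj (R := ℝ) (φ := fun _ : Fin (d+1) => ℝ)
      (Fin.last d)).contDiff).comp h1
  have hψcd : ContDiff ℝ 1 ψ :=
    contDiff_const.mul (contDiff_pos2.comp (contDiff_const.sub (contDiff_eC p₁)))
  have hwcd : ContDiff ℝ 1 w := hψcd.sub hzc_cd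
  have hvcd : ContDiff ℝ 1 v := contDiff_pos2.comp hwcd
  have hΘcd : ContDiff ℝ 1 Θ := hβcd.comp (contDiff_eC p₁)
  have hqcd : ContDiff ℝ 1 q := hΘcd.mul hvcd
  set qt : Phase d → ℝ := fun p => q (Lc p) with hqt_def
  have hqtcd : ContDiff ℝ 1 qt := hqcd.comp Lc.contDiff
  set Q : Phase d → ℝ := fun p => q p + qt p with hQ_def
  have hQcd : ContDiff ℝ 1 Q := hqcd.add hqtcd
  -- supports
  have hqKb : ∀ p, p ∉ Kb → q p = 0 := by
    intro p hp
    have h0 : ρ^2 < eC p₁ p := by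
      by_contra h
      exact hp (by rw [hKb_def]; exact not_lt.mp h)
    have : Θ p = 0 := hβ0 _ (by nlinarith [sq_nonneg ρ])
    rw [hq_def]; simp only; rw [this, zero_mul]
  have hqtT : ∀ p, p ∉ T → qt p = 0 := by
    intro p hp
    rw [hqt_def]
    apply hqKb
    intro hmem
    apply hp
    rw [hKb_def] at hmem
    simp only [mem_setOf_eq] at hmem
    rw [eC_Lc] at hmem
    exact hmem
  have htsq : tsupport q ⊆ Kb :=
    closure_minimal (fun p hp => Classical.byContradiction fun h => hp (hqKb p h)) hKbclosed
  have htsqt : tsupport qt ⊆ T :=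
    closure_minimal (fun p hp => Classical.byContradiction fun h => hp (hqtT p h)) hTclosed
  have hQsupp0 : ∀ p, p ∉ Kb ∪ T → Q p = 0 := by
    intro p hp
    rw [hQ_def]; simp only
    rw [hqKb p (fun h => hp (Or.inl h)), hqtT p (fun h => hp (Or.inr h)), add_zero]
  have htsQ : tsupport Q ⊆ Kb ∪ T :=
    closure_minimal (fun p hp => Classical.byContradiction fun h => hp (hQsupp0 p h))
      (hKbclosed.union hTclosed)
  have hQHCS : HasCompactSupport Q :=
    (hKbcomp.union hTcomp).of_isClosed_subset (isClosed_tsupport Q) htsQ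
  have htsQ𝒰 : tsupport Q ⊆ 𝒰 := subset_trans htsQ (union_subset hKb𝒰 hT𝒰)
  -- the boundary term vanishes
  have hPhi : PhiFn a Q = fun _ => (0:ℝ) := by
    funext r'
    unfold PhiFn
    split_ifs with hr
    · have e1 : qt (liftB r' (Real.sqrt (rb a r'))) = q (liftB r' (-Real.sqrt (rb a r'))) := by
        rw [hqt_def]; simp only; rw [Lc_liftB]
      have e2 : qt (liftB r' (-Real.sqrt (rb a r'))) = q (liftB r' (Real.sqrt (rb a r'))) := by
        rw [hqt_def]; simp only; rw [Lc_liftB, neg_neg]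
      have hnum : Q (liftB r' (Real.sqrt (rb a r'))) - Q (liftB r' (-Real.sqrt (rb a r'))) = 0 := by
        rw [hQ_def]; simp only
        rw [e1, e2]; ring
      rw [hnum, zero_div]
    · have hdq := hqcd.differentiable one_ne_zero
      have hdqt := hqtcd.differentiable one_ne_zero
      have hL0 : Lc (liftB r' 0) = liftB r' 0 := by rw [Lc_liftB, neg_zero]
      have hfQ : fderiv ℝ Q (liftB r' 0) =
          fderiv ℝ q (liftB r' 0) + fderiv ℝ qt (liftB r' 0) := by
        rw [hQ_def]
        exact fderiv_add (hdq _) (hdqt _)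
      have hfqt : fderiv ℝ qt (liftB r' 0) =
          (fderiv ℝ q (Lc (liftB r' 0))).comp (Lc (d := d) : Phase d →L[ℝ] Phase d) := by
        have hcomp : qt = q ∘ (Lc (d := d) : Phase d →L[ℝ] Phase d) := rfl
        rw [hcomp, fderiv_comp _ (hdq _) (Lc.differentiableAt), ContinuousLinearMap.fderiv]
      rw [hfQ, hfqt, hL0]
      rw [ContinuousLinearMap.add_apply, ContinuousLinearMap.comp_apply, Lc_eζ, map_neg]
      ring
  -- apply the transport equation
  have hEq : ∫ p, fderiv ℝ Q p (Hp a p) ∂μ = ∫ p, f p * Q p ∂μ := by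
    have hb := hbte Q hQcd hQHCS htsQ𝒰
    rw [hPhi] at hb
    simpa using hb
  -- integrability
  have hcfd : Continuous (fderiv ℝ Q) := hQcd.continuous_fderiv one_ne_zero
  have hφ₁int : Integrable (fun p => fderiv ℝ Q p (Hp a p)) μ := by
    apply integrable_of_contOn_supp h𝒰 hμ (hKbcomp.union hTcomp) (union_subset hKb𝒰 hT𝒰)
    · exact ContinuousOn.clm_apply hcfd.continuousOn ((continuousOn_Hp a hU ha).mono h𝒰U)
    · intro x hx
      have h0 : x ∉ Function.support (fderiv ℝ Q) :=
        fun hc => hx (htsQ (support_fderiv_subset (𝕜 := ℝ) hc))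
      rw [Function.notMem_support.mp h0]
      simp
  have hφ₂int : Integrable (fun p => f p * Q p) μ := by
    apply integrable_of_contOn_supp h𝒰 hμ (hKbcomp.union hTcomp) (union_subset hKb𝒰 hT𝒰)
    · exact hf.mul (hQcd.continuous.continuousOn)
    · intro x hx; rw [hQsupp0 x hx, mul_zero]
  set g : Phase d → ℝ := fun p => σ * (f p * Q p - fderiv ℝ Q p (Hp a p)) with hg_def
  have hgint : Integrable g μ := (hφ₂int.sub hφ₁int).const_mul σ
  have hgzero : ∫ p, g p ∂μ = 0 := by
    rw [hg_def]
    rw [MeasureTheory.integral_const_mul]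
    rw [integral_sub hφ₂int hφ₁int, hEq]
    simp
  -- the linear functional zc
  set zcL : Phase d →L[ℝ] ℝ :=
    (ContinuousLinearMap.proj (R := ℝ) (φ := fun _ : Fin (d+1) => ℝ) (Fin.last d)).comp
      ((ContinuousLinearMap.fst ℝ (Fin (d+1) → ℝ) (ℝ × (Fin (d+1) → ℝ))).comp
        (ContinuousLinearMap.snd ℝ ℝ ((Fin (d+1) → ℝ) × ℝ × (Fin (d+1) → ℝ)))) with hzcL_def
  have hzcLHp : ∀ p' : Phase d, zcL (Hp a p') = Hpz a p' := fun p' => rfl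
  -- pointwise inequality on the support
  have hptwise : ∀ p, p ∈ msupp μ → p ∉ T → |s| * u p ≤ g p := by
    intro p hp hpT
    have hz : 0 ≤ zc p := (hstand.1 hp).2
    have hqtp : qt p = 0 := hqtT p hpT
    have hfqt0 : fderiv ℝ qt p = 0 := by
      have h0 : p ∉ Function.support (fderiv ℝ qt) :=
        fun hc => hpT (htsqt (support_fderiv_subset (𝕜 := ℝ) hc))
      exact Function.notMem_support.mp h0
    have hdq := hqcd.differentiable one_ne_zero
    have hdqt := hqtcd.differentiable one_ne_zero
    have hQp : Q p = q p := by rw [hQ_def]; simp only; rw [hqtp, add_zero]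
    have hfQp : fderiv ℝ Q p = fderiv ℝ q p := by
      rw [hQ_def, fderiv_fun_add (hdq p) (hdqt p), hfqt0, add_zero]
    -- derivatives
    have hE : HasFDerivAt (eC p₁) (fderiv ℝ (eC p₁) p) p :=
      (((contDiff_eC p₁).differentiable one_ne_zero) p).hasFDerivAt
    have hsub : HasFDerivAt (fun p' : Phase d => c₁ - eC p₁ p') (-(fderiv ℝ (eC p₁) p)) p :=
      hE.const_sub c₁
    have hψd : HasFDerivAt ψ
        ((κ * (2 * max (c₁ - eC p₁ p) 0)) • (-(fderiv ℝ (eC p₁) p))) p := by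
      have hc2 : HasFDerivAt (fun p' : Phase d => pos2 (c₁ - eC p₁ p'))
          ((2 * max (c₁ - eC p₁ p) 0) • (-(fderiv ℝ (eC p₁) p))) p :=
        (hasDerivAt_pos2 _).comp_hasFDerivAt p hsub
      rw [hψ_def, ← smul_smul]
      exact hc2.const_mul κ
    have hzcd : HasFDerivAt (zc : Phase d → ℝ) zcL p := zcL.hasFDerivAt
    have hwd : HasFDerivAt w
        ((κ * (2 * max (c₁ - eC p₁ p) 0)) • (-(fderiv ℝ (eC p₁) p)) - zcL) p := by
      rw [hw_def]; exact hψd.sub hzcd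
    have hvd : HasFDerivAt v ((2 * u p) •
        ((κ * (2 * max (c₁ - eC p₁ p) 0)) • (-(fderiv ℝ (eC p₁) p)) - zcL)) p := by
      rw [hv_def]
      exact (hasDerivAt_pos2 (w p)).comp_hasFDerivAt p hwd
    rcases eq_or_lt_of_le (le_max_right (w p) (0:ℝ) : (0:ℝ) ≤ u p) with hup | hup
    · -- u p = 0 : everything vanishes
      have hup0 : u p = 0 := hup.symm
      have hwp : w p ≤ 0 := by
        have h1 : w p ≤ u p := le_max_left _ _
        rw [hup0] at h1; exact h1
      have hvp : v p = 0 := by rw [hv_def]; exact pos2_of_nonpos hwp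
      have hqp : q p = 0 := by rw [hq_def]; simp only; rw [hvp, mul_zero]
      have hΘd : HasFDerivAt Θ (fderiv ℝ Θ p) p :=
        ((hΘcd.differentiable one_ne_zero) p).hasFDerivAt
      have hqd : HasFDerivAt q (Θ p • ((2 * u p) •
          ((κ * (2 * max (c₁ - eC p₁ p) 0)) • (-(fderiv ℝ (eC p₁) p)) - zcL))
            + v p • fderiv ℝ Θ p) p := by
        rw [hq_def]; exact hΘd.mul hvd
      have hfq0 : fderiv ℝ q p = 0 := by
        rw [hqd.fderiv, hup0, hvp]
        simp
      rw [hg_def]; simp only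
      rw [hQp, hfQp, hqp, hfq0, hup0]
      simp
    · -- u p > 0
      have hup0 : (0:ℝ) ≤ u p := le_of_lt hup
      have hwp : 0 < w p := by
        rcases lt_or_ge 0 (w p) with h | h
        · exact h
        · exfalso
          have hup' : (0:ℝ) < max (w p) 0 := hup
          rw [max_eq_right h] at hup'
          exact lt_irrefl 0 hup'
      have huw : u p = w p := by rw [hu_def]; simp only; exact max_eq_left hwp.le
      have hwps : 0 < ψ p - zc p := by
        have he' : w p = ψ p - zc p := by rw [hw_def]
        rw [he'] at hwp; exact hwp
      have hψpos : 0 < ψ p := by linarith only [hwps, hz]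
      have heC : eC p₁ p < c₁ := by
        by_contra hcon
        push_neg at hcon
        have h0 : pos2 (c₁ - eC p₁ p) = 0 := pos2_of_nonpos (by linarith only [hcon])
        have hψ0 : ψ p = 0 := by rw [hψ_def]; simp only; rw [h0, mul_zero]
        linarith only [hψ0, hψpos]
      have hρsq : (0:ℝ) < ρ^2 := by positivity
      have heC' : eC p₁ p < ρ^2/8 := by rw [hc₁_def] at heC; exact heC
      have hpKb : p ∈ Kb := by
        rw [hKb_def]; simp only [mem_setOf_eq]
        linarith only [heC', hρsq]
      -- Θ = 1 near p
      have hopen : IsOpen {p' : Phase d | eC p₁ p' < ρ^2/4} :=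
        isOpen_lt (heCc p₁) continuous_const
      have hmem : p ∈ {p' : Phase d | eC p₁ p' < ρ^2/4} := by
        simp only [mem_setOf_eq]
        linarith only [heC', hρsq]
      have hqv : q =ᶠ[𝓝 p] v := by
        filter_upwards [hopen.mem_nhds hmem] with y hy
        rw [hq_def]; simp only
        rw [hΘ_def]; simp only
        rw [hβ1 _ (le_of_lt hy), one_mul]
      have hfqv : fderiv ℝ q p = fderiv ℝ v p := hqv.fderiv_eq
      set A : ℝ := κ * (2 * max (c₁ - eC p₁ p) 0) * (-(fderiv ℝ (eC p₁) p (Hp a p)))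
        with hA_def
      have hfQval : fderiv ℝ Q p (Hp a p) = 2 * u p * (A - Hpz a p) := by
        rw [hfQp, hfqv, hvd.fderiv]
        simp only [ContinuousLinearMap.smul_apply, ContinuousLinearMap.sub_apply,
          ContinuousLinearMap.neg_apply, smul_eq_mul, hzcLHp]
        all_goals (rw [hA_def])
      -- the value of q
      have hΘ1 : Θ p = 1 := by
        rw [hΘ_def]; simp only
        apply hβ1
        linarith only [heC', hρsq]
      have hqval : q p = (u p)^2 := by
        rw [hq_def]; simp only
        rw [hΘ1, one_mul, hv_def]; simp only
        rw [pos2, huw, max_eq_left hwp.le]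
      -- bounds
      have hfb : |f p| ≤ F := hFb p hpKb
      have hMbp : |fderiv ℝ (eC p₁) p (Hp a p)| ≤ M := hMb p hpKb
      have hmax_le : max (c₁ - eC p₁ p) 0 ≤ c₁ := by
        apply max_le _ hc₁.le
        linarith only [eC_nonneg p₁ p]
      have hmax_nn : (0:ℝ) ≤ max (c₁ - eC p₁ p) 0 := le_max_right _ _
      have hAle : |A| ≤ |s|/8 := by
        have h1 : |A| ≤ κ * (2*c₁) * M := by
          rw [hA_def, abs_mul, abs_mul, abs_neg]
          have e1 : |κ| = κ := abs_of_pos hκ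
          have e2 : |2 * max (c₁ - eC p₁ p) 0| ≤ 2 * c₁ := by
            rw [abs_of_nonneg (by linarith only [hmax_nn])]
            linarith only [hmax_le]
          rw [e1]
          exact mul_le_mul (mul_le_mul_of_nonneg_left e2 hκ.le) hMbp (abs_nonneg _)
            (by positivity)
        linarith only [hkey2, h1]
      have hH := hKbHpz p hpKb
      have hσH : 3/4*|s| ≤ σ * Hpz a p := by
        rcases abs_lt.mp hH with ⟨hl, hr⟩
        rw [hσ_def]
        split_ifs with hspos
        · rw [abs_of_pos hspos] at hl hr ⊢
          linarith only [hl, hr]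
        · have hsneg : s < 0 := lt_of_le_of_ne (not_lt.mp hspos) h4
          rw [abs_of_neg hsneg] at hl hr ⊢
          linarith only [hl, hr]
      have hule : u p ≤ κ * c₁^2 := by
        have h1 : ψ p ≤ κ * c₁^2 := by
          rw [hψ_def]; simp only
          exact mul_le_mul_of_nonneg_left
            (pos2_le_sq (by linarith only [eC_nonneg p₁ p]) hc₁.le) hκ.le
        have h2 : w p ≤ ψ p := by rw [hw_def]; simp only; linarith only [hz]
        have h3' : u p ≤ ψ p := by rw [huw]; exact h2
        linarith only [h3', h1]
      have hσf : -F ≤ σ * f p := by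
        have h1 : |σ * f p| ≤ F := by rw [abs_mul, hσabs, one_mul]; exact hfb
        linarith only [h1, neg_abs_le (σ * f p)]
      have hσA : σ * A ≤ |s|/8 := by
        have h1 : |σ * A| ≤ |s|/8 := by rw [abs_mul, hσabs, one_mul]; exact hAle
        linarith only [h1, le_abs_self (σ * A)]
      -- final computation
      rw [hg_def]; simp only
      rw [hQp, hqval, hfQval]
      have expand : σ * (f p * (u p)^2 - 2 * u p * (A - Hpz a p)) =
          (σ * f p) * (u p)^2 - 2 * u p * (σ * A) + 2 * u p * (σ * Hpz a p) := by ring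
      rw [expand]
      have hsq : (u p)^2 = u p * u p := pow_two (u p)
      have a1 : (-F) * (u p)^2 ≤ (σ * f p) * (u p)^2 :=
        mul_le_mul_of_nonneg_right hσf (sq_nonneg _)
      have a2 : F * u p ≤ F * (κ * c₁^2) := mul_le_mul_of_nonneg_left hule hFnn
      have a3 : (F * u p) * u p ≤ (F * (κ * c₁^2)) * u p :=
        mul_le_mul_of_nonneg_right a2 hup0
      have a4 : (F * (κ * c₁^2)) * u p ≤ (|s|/8) * u p :=
        mul_le_mul_of_nonneg_right hkey1 hup0
      have t1 : -(|s|/8) * u p ≤ (σ * f p) * (u p)^2 := by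
        linarith only [a1, a3, a4, hsq]
      have a5 : (2 * u p) * (σ * A) ≤ (2 * u p) * (|s|/8) :=
        mul_le_mul_of_nonneg_left hσA (by linarith only [hup0])
      have a6 : (2 * u p) * (3/4*|s|) ≤ (2 * u p) * (σ * Hpz a p) :=
        mul_le_mul_of_nonneg_left hσH (by linarith only [hup0])
      have a7 : 0 ≤ |s| * u p := mul_nonneg (abs_nonneg s) hup0
      linarith only [t1, a5, a6, a7]
  -- conclude from the vanishing integral
  have hTnull : μ T = 0 := measure_mono_null hTO hOnull
  have haeT : ∀ᵐ p ∂μ, p ∉ T := by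
    rw [MeasureTheory.ae_iff]
    simpa [not_not] using hTnull
  have hae1 : ∀ᵐ p ∂μ, |s| * u p ≤ g p := by
    filter_upwards [ae_mem_msupp μ, haeT] with p hp hpT using hptwise p hp hpT
  have hgnn : 0 ≤ᵐ[μ] g := by
    filter_upwards [hae1] with p hp
    have h0 : 0 ≤ |s| * u p := mul_nonneg (abs_nonneg s) (le_max_right _ _)
    exact le_trans h0 hp
  have hg0 : g =ᵐ[μ] 0 := (integral_eq_zero_iff_of_nonneg_ae hgnn hgint).1 hgzero
  have hu0 : ∀ᵐ p ∂μ, u p = 0 := by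
    filter_upwards [hae1, hg0] with p hh1 hh2
    have h2 : g p = 0 := hh2
    have h3' : |s| * u p ≤ 0 := by rw [h2] at hh1; exact hh1
    have h4' : 0 ≤ u p := le_max_right _ _
    have h5' : ¬ (0 < u p) := fun hcon => absurd h3' (not_le.mpr (mul_pos hs hcon))
    exact le_antisymm (not_lt.mp h5') h4'
  have hWnull : μ {p : Phase d | 0 < w p} = 0 := by
    have h1 : μ {p : Phase d | ¬ u p = 0} = 0 := MeasureTheory.ae_iff.mp hu0
    refine measure_mono_null ?_ h1
    intro p hp
    simp only [mem_setOf_eq] at hp ⊢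
    rw [hu_def]; simp only
    rw [max_eq_left (le_of_lt hp)]
    exact ne_of_gt hp
  have hWopen : IsOpen {p : Phase d | 0 < w p} :=
    isOpen_lt continuous_const (hwcd.continuous)
  have hp₁W : p₁ ∈ {p : Phase d | 0 < w p} := by
    simp only [mem_setOf_eq]
    rw [hw_def]; simp only
    rw [h3, sub_zero, hψ_def]; simp only
    have he0 : eC p₁ p₁ = 0 := by unfold eC; simp
    rw [he0, sub_zero]
    exact mul_pos hκ (pos2_pos hc₁)
  exact (not_msupp_iff μ p₁).2 ⟨_, hWopen, hp₁W, hWnull⟩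

theorem stmt10 (U : Set (Fin (d + 1) → ℝ)) (hU : IsOpen U)
    (hmet : MetricHyp a U) (hqn : QuasiNormal a U)
    (𝒰 : Set (Phase d)) (h𝒰 : IsOpen 𝒰) (h𝒰U : 𝒰 ⊆ {ϱ : Phase d | ϱ.2.1 ∈ U})
    (f : Phase d → ℝ) (hf : ContinuousOn f 𝒰)
    (μ : Measure (Phase d)) (ν : Measure (BPhase d))
    (hμ : RadonOn 𝒰 μ) (hν : BRadon U ν)
    (hbte : BTE a 𝒰 μ ν f) (hstand : StandingSupp a μ)
    (ϱ : Phase d) (hϱH : ϱ ∈ Hplus a ∪ Hminus a)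
    (hϱ𝒰 : ϱ ∈ 𝒰) (hrϱ𝒰 : reflζ ϱ ∈ 𝒰) :
    ϱ ∈ msupp μ ↔ reflζ ϱ ∈ msupp μ := by
  have hzc : zc ϱ = 0 := hϱH.elim (fun h => h.1) (fun h => h.1)
  have hHpz : Hpz a ϱ ≠ 0 := hϱH.elim (fun h => ne_of_gt h.2.2) (fun h => ne_of_lt h.2.2)
  have hx : ϱ.2.1 ∈ U := h𝒰U hϱ𝒰
  have hrefl_eq : Lc ϱ = reflζ ϱ := Lc_apply ϱ
  have hHpzL : Hpz a (Lc ϱ) = -Hpz a ϱ := Hpz_Lc_boundary a hqn ϱ hx hzc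
  have hzcL' : zc (Lc ϱ) = 0 := by rw [zc_Lc]; exact hzc
  constructor
  · intro hsupp
    by_contra hns
    have hn : ϱ ∉ msupp μ :=
      main_aux a U hU hmet.1 𝒰 h𝒰 h𝒰U f hf μ ν hμ hbte hstand ϱ hϱ𝒰
        (by rw [hrefl_eq]; exact hrϱ𝒰) hzc hHpz (by rw [hrefl_eq]; exact hns)
    exact hn hsupp
  · intro hsupp
    by_contra hns
    have hn : Lc ϱ ∉ msupp μ :=
      main_aux a U hU hmet.1 𝒰 h𝒰 h𝒰U f hf μ ν hμ hbte hstand (Lc ϱ)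
        (by rw [hrefl_eq]; exact hrϱ𝒰) (by rw [Lc_invol]; exact hϱ𝒰) hzcL'
        (by rw [hHpzL]; exact neg_ne_zero.mpr hHpz) (by rw [Lc_invol]; exact hns)
    exact hn (by rw [hrefl_eq]; exact hsupp)
end
end

section
/- In the quasi-normal local model, let γ : J∖B → ℝ × U × ℝ × ℝ^d be a generalized bicharacteristic whose image, together with all one-sided limits γ(S^±) for S ∈ B, is contained in a compact subset of ℝ × U × ℝ × ℝ^d. Then for every compact interval I contained in the interior of J, the family (H_pz(γ(S⁺)))_{S ∈ B∩I} is summable: ∑_{S ∈ B∩I} H_pz(γ(S⁺)) < ∞ (each term is positive since γ(S⁺) ∈ H_∂⁺; equivalently, the jumps of the ζ-component of γ at its reflection points in I form an absolutely convergent series). -/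
open MeasureTheory Filter Topology Set

noncomputable section

variable {d : ℕ}

variable (a : (Fin (d + 1) → ℝ) → Fin (d + 1) → Fin (d + 1) → ℝ)

set_option maxHeartbeats 3200000 in
theorem stmt18 (U : Set (Fin (d + 1) → ℝ)) (hU : IsOpen U)
    (hmet : MetricHyp a U) (hqn : QuasiNormal a U)
    (J B : Set ℝ) (γ : ℝ → Phase d)
    (hγ : IsGenBichar a J B γ)
    (hγU : ∀ s ∈ J \ B, (γ s).2.1 ∈ U)
    (hcpt : IsCompact (closure (γ '' (J \ B))))
    (c e : ℝ) (hI : Set.Icc c e ⊆ interior J) :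
    ∃ g : ℝ → ℝ,
      (∀ S ∈ B ∩ Set.Icc c e, ∃ ϱp ∈ Hplus a,
        Tendsto γ (𝓝[(J \ B) ∩ Set.Ioi S] S) (𝓝 ϱp) ∧ g S = Hpz a ϱp) ∧
      Summable (fun S : (B ∩ Set.Icc c e : Set ℝ) => g (S : ℝ)) := by
  classical
  obtain ⟨haC1, hsymm, hpos⟩ := hmet
  -- coordinates of `a` are C¹ on U
  have haC : ∀ i j, ContDiffOn ℝ 1 (fun x => a x i j) U := fun i j =>
    contDiffOn_pi.mp (contDiffOn_pi.mp haC1 i) j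
  set V : Set (Phase d) := {ϱ | ϱ.2.1 ∈ U} with hVdef
  have hproj : Continuous (fun ϱ : Phase d => ϱ.2.1) := continuous_fst.comp continuous_snd
  have hprojC : ContDiff ℝ 1 (fun ϱ : Phase d => ϱ.2.1) := contDiff_fst.comp contDiff_snd
  have hVo : IsOpen V := hU.preimage hproj
  -- `Hpz` is C¹ on V
  have hHpzC : ContDiffOn ℝ 1 (Hpz a) V := by
    have h2 : ∀ j : Fin (d + 1), ContDiff ℝ 1 (fun ϱ : Phase d => ϱ.2.2.2 j) := fun j =>
      (contDiff_pi.mp contDiff_id j).comp (contDiff_snd.comp (contDiff_snd.comp contDiff_snd))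
    have h1 : ∀ j, ContDiffOn ℝ 1 (fun ϱ : Phase d => a ϱ.2.1 (Fin.last d) j) V := fun j =>
      (haC (Fin.last d) j).comp hprojC.contDiffOn (fun ϱ hϱ => hϱ)
    have hsum : ContDiffOn ℝ 1
        (fun ϱ : Phase d => ∑ j, a ϱ.2.1 (Fin.last d) j * ϱ.2.2.2 j) V :=
      ContDiffOn.sum (fun j _ => (h1 j).mul (h2 j).contDiffOn)
    exact contDiffOn_const.mul hsum
  have hHpzcont : ContinuousOn (Hpz a) V := hHpzC.continuousOn
  have hfdcont : ContinuousOn (fun ϱ => fderiv ℝ (Hpz a) ϱ) V :=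
    hHpzC.continuousOn_fderiv_of_isOpen hVo le_rfl
  have hHpzdiff : ∀ ϱ ∈ V, HasFDerivAt (Hpz a) (fderiv ℝ (Hpz a) ϱ) ϱ := fun ϱ hϱ =>
    (((hHpzC.differentiableOn one_ne_zero) ϱ hϱ).differentiableAt (hVo.mem_nhds hϱ)).hasFDerivAt
  -- directional derivative of Hpz in the eζ direction
  have heζ : ∀ ϱ ∈ V, fderiv ℝ (Hpz a) ϱ (eζ d) =
      2 * a ϱ.2.1 (Fin.last d) (Fin.last d) := by
    intro ϱ hϱ
    obtain ⟨w, x, τ0, ξ0⟩ := ϱ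
    have hline : HasDerivAt (fun t : ℝ => ((w, x, τ0, ξ0) : Phase d) + t • eζ d) (eζ d) 0 := by
      simpa using ((hasDerivAt_id (0 : ℝ)).smul_const (eζ d)).const_add
        ((w, x, τ0, ξ0) : Phase d)
    have hl' : HasFDerivAt (Hpz a) (fderiv ℝ (Hpz a) ((w, x, τ0, ξ0) : Phase d))
        ((fun t : ℝ => ((w, x, τ0, ξ0) : Phase d) + t • eζ d) 0) := by
      simp only [zero_smul, add_zero]
      exact hHpzdiff _ hϱ
    have h1 := hl'.comp_hasDerivAt 0 hline
    have hpath : (fun t : ℝ => Hpz a (((w, x, τ0, ξ0) : Phase d) + t • eζ d)) =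
        fun t : ℝ => Hpz a ((w, x, τ0, ξ0) : Phase d) +
          t * (2 * a x (Fin.last d) (Fin.last d)) := by
      funext t
      simp only [Hpz, eζ, Prod.smul_mk, Prod.mk_add_mk, smul_zero, add_zero, Pi.add_apply,
        Pi.smul_apply, smul_eq_mul, Pi.single_apply, mul_add, mul_ite, mul_one, mul_zero,
        Finset.sum_add_distrib, Finset.sum_ite_eq', Finset.mem_univ, if_true]
      ring
    have h1' : HasDerivAt (fun t : ℝ => Hpz a (((w, x, τ0, ξ0) : Phase d) + t • eζ d))
        ((fderiv ℝ (Hpz a) ((w, x, τ0, ξ0) : Phase d)) (eζ d)) 0 := h1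
    rw [hpath] at h1'
    have h2 : HasDerivAt (fun t : ℝ => Hpz a ((w, x, τ0, ξ0) : Phase d) +
        t * (2 * a x (Fin.last d) (Fin.last d))) (2 * a x (Fin.last d) (Fin.last d)) 0 := by
      simpa using ((hasDerivAt_id (0 : ℝ)).mul_const
        (2 * a x (Fin.last d) (Fin.last d))).const_add (Hpz a ((w, x, τ0, ξ0) : Phase d))
    exact h1'.unique h2
  -- continuity of Hp on V
  have hHpcont : ContinuousOn (Hp a) V := by
    have hfd : ∀ i j, ContinuousOn (fun x => fderiv ℝ (fun y => a y i j) x) U := fun i j =>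
      (haC i j).continuousOn_fderiv_of_isOpen hU le_rfl
    have hacont : ∀ i j, ContinuousOn (fun ϱ : Phase d => a ϱ.2.1 i j) V := fun i j =>
      ((haC i j).continuousOn).comp hproj.continuousOn (fun ϱ hϱ => hϱ)
    have hξcont : ∀ j, Continuous (fun ϱ : Phase d => ϱ.2.2.2 j) := fun j =>
      (continuous_apply j).comp (continuous_snd.comp (continuous_snd.comp continuous_snd))
    have hform : ∀ ϱ ∈ V, ∀ k : Fin (d + 1),
        fderiv ℝ (fun y => qf (a y) ϱ.2.2.2) ϱ.2.1 (Pi.single k 1) =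
        ∑ i, ∑ j, (ϱ.2.2.2 i * ϱ.2.2.2 j) *
          fderiv ℝ (fun y => a y i j) ϱ.2.1 (Pi.single k 1) := by
      intro ϱ hϱ k
      have hda : ∀ i j, DifferentiableAt ℝ (fun y => a y i j) ϱ.2.1 := fun i j =>
        ((haC i j).differentiableOn one_ne_zero _ hϱ).differentiableAt (hU.mem_nhds hϱ)
      have hterm : ∀ i j, HasFDerivAt (fun y => a y i j * ϱ.2.2.2 i * ϱ.2.2.2 j)
          ((ϱ.2.2.2 i * ϱ.2.2.2 j) • fderiv ℝ (fun y => a y i j) ϱ.2.1) ϱ.2.1 := by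
        intro i j
        have h := ((hda i j).hasFDerivAt.mul_const (ϱ.2.2.2 i)).mul_const (ϱ.2.2.2 j)
        have hsm : ϱ.2.2.2 j • ϱ.2.2.2 i • fderiv ℝ (fun y => a y i j) ϱ.2.1 =
            (ϱ.2.2.2 i * ϱ.2.2.2 j) • fderiv ℝ (fun y => a y i j) ϱ.2.1 := by
          rw [smul_smul, mul_comm]
        rwa [hsm] at h
      have hsum : HasFDerivAt (fun y => qf (a y) ϱ.2.2.2)
          (∑ i, ∑ j, (ϱ.2.2.2 i * ϱ.2.2.2 j) • fderiv ℝ (fun y => a y i j) ϱ.2.1) ϱ.2.1 := by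
        apply HasFDerivAt.fun_sum
        intro i _
        exact HasFDerivAt.fun_sum (fun j _ => hterm i j)
      rw [hsum.fderiv]
      simp [ContinuousLinearMap.sum_apply, ContinuousLinearMap.smul_apply, smul_eq_mul]
    have hFcont : ContinuousOn (fun ϱ : Phase d =>
        ((-(2 * ϱ.2.2.1),
          fun i => 2 * ∑ j, a ϱ.2.1 i j * ϱ.2.2.2 j,
          0,
          fun k => -∑ i, ∑ j, (ϱ.2.2.2 i * ϱ.2.2.2 j) *
            fderiv ℝ (fun y => a y i j) ϱ.2.1 (Pi.single k 1)) : Phase d)) V := by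
      apply ContinuousOn.prodMk
      · exact ((continuous_fst.comp (continuous_snd.comp continuous_snd)).const_smul
          (2:ℝ)).neg.continuousOn
      apply ContinuousOn.prodMk
      · rw [continuousOn_pi]
        intro i
        exact continuousOn_const.mul (continuousOn_finset_sum _ (fun j _ =>
          (hacont i j).mul (hξcont j).continuousOn))
      apply ContinuousOn.prodMk
      · exact continuousOn_const
      · rw [continuousOn_pi]
        intro k
        apply ContinuousOn.neg
        apply continuousOn_finset_sum
        intro i _
        apply continuousOn_finset_sum
        intro j _
        refine ContinuousOn.mul ?_ ?_
        · exact ((hξcont i).mul (hξcont j)).continuousOn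
        · exact ((hfd i j).comp hproj.continuousOn (fun ϱ hϱ => hϱ)).clm_apply
            continuousOn_const
    apply hFcont.congr
    intro ϱ hϱ
    have h4 : (fun k => -(fderiv ℝ (fun y => qf (a y) ϱ.2.2.2) ϱ.2.1 (Pi.single k 1))) =
        fun k : Fin (d + 1) => -∑ i, ∑ j, (ϱ.2.2.2 i * ϱ.2.2.2 j) *
          fderiv ℝ (fun y => a y i j) ϱ.2.1 (Pi.single k 1) := by
      funext k
      rw [hform ϱ hϱ k]
    show Hp a ϱ = _
    simp only [Hp]
    rw [h4]
  have hHp2zcont : ContinuousOn (Hp2z a) V := by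
    have := hfdcont.clm_apply hHpcont
    exact this
  -- the linear functional z-component
  set Lz : Phase d →L[ℝ] ℝ :=
    (ContinuousLinearMap.proj (Fin.last d)).comp
      ((ContinuousLinearMap.fst ℝ (Fin (d + 1) → ℝ) (ℝ × (Fin (d + 1) → ℝ))).comp
        (ContinuousLinearMap.snd ℝ ℝ ((Fin (d + 1) → ℝ) × ℝ × (Fin (d + 1) → ℝ)))) with hLzdef
  have hLzapp : ∀ ϱ : Phase d, Lz ϱ = zc ϱ := fun _ => rfl
  have hLzHp : ∀ ϱ : Phase d, Lz (Hp a ϱ) = Hpz a ϱ := fun _ => rfl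
  have hLzeζ : Lz (eζ d) = 0 := rfl
  have hLzHpG : ∀ ϱ : Phase d, Lz (HpG a ϱ) = Hpz a ϱ := by
    intro ϱ
    simp only [HpG, map_sub, _root_.map_smul, hLzeζ, hLzHp]
    simp
  have hzccont : Continuous (zc (d := d)) := by
    have : (Lz : Phase d → ℝ) = zc := funext hLzapp
    rw [← this]
    exact Lz.continuous
  -- basic topological helpers
  have hNB2 : ∀ x y : ℝ, x < y → ∀ s : Set ℝ, Ioo x y ⊆ s →
      (𝓝[s] x).NeBot ∧ (𝓝[s] y).NeBot := by
    intro x y hxy s hsub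
    constructor
    · rw [← mem_closure_iff_nhdsWithin_neBot]
      exact closure_mono hsub (by rw [closure_Ioo hxy.ne]; exact left_mem_Icc.mpr hxy.le)
    · rw [← mem_closure_iff_nhdsWithin_neBot]
      exact closure_mono hsub (by rw [closure_Ioo hxy.ne]; exact right_mem_Icc.mpr hxy.le)
  have hioo : ∀ S ∈ B, S ∈ interior J → ∃ η > 0,
      Ioo (S - η) (S + η) ⊆ interior J ∧ ∀ s ∈ B, s ∈ Ioo (S - η) (S + η) → s = S := by
    intro S hSB hSJ
    obtain ⟨η₁, hη₁, hb⟩ := Metric.isOpen_iff.mp isOpen_interior S hSJ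
    obtain ⟨ε, hε, hd⟩ := hγ.discr S hSB
    refine ⟨min η₁ ε, lt_min hη₁ hε, ?_, ?_⟩
    · intro s hs
      apply hb
      rw [Metric.mem_ball, Real.dist_eq]
      have h1 : |s - S| < min η₁ ε :=
        abs_sub_lt_iff.mpr ⟨by linarith [hs.2], by linarith [hs.1]⟩
      exact lt_of_lt_of_le h1 (min_le_left _ _)
    · intro s hsB hs
      apply hd s hsB
      have h1 : |s - S| < min η₁ ε :=
        abs_sub_lt_iff.mpr ⟨by linarith [hs.2], by linarith [hs.1]⟩
      exact lt_of_lt_of_le h1 (min_le_right _ _)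
  have hNBright : ∀ S ∈ B, S ∈ interior J → (𝓝[(J \ B) ∩ Ioi S] S).NeBot := by
    intro S h1 h2
    obtain ⟨η, hη, hsubJ, hiso⟩ := hioo S h1 h2
    have hsub : Ioo S (S + η) ⊆ (J \ B) ∩ Ioi S := by
      intro s hs
      refine ⟨⟨interior_subset (hsubJ ⟨by linarith [hs.1], hs.2⟩), fun hsB => ?_⟩, hs.1⟩
      exact (ne_of_gt hs.1) (hiso s hsB ⟨by linarith [hs.1], hs.2⟩)
    exact (hNB2 S (S + η) (by linarith) _ hsub).1
  have hcontJB : ∀ s ∈ J \ B, ContinuousWithinAt γ (J \ B) s := by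
    intro s hs
    by_cases hG : γ s ∈ Gsg a
    · exact (hγ.derivHpG s hs hG).continuousWithinAt
    · exact (hγ.derivHp s hs hG).continuousWithinAt
  -- the function g
  set g : ℝ → ℝ := fun S => Hpz a (limUnder (𝓝[(J \ B) ∩ Ioi S] S) γ) with hgdef
  have hgspec : ∀ S ∈ B, S ∈ interior J → ∃ ϱp ∈ Hplus a,
      Tendsto γ (𝓝[(J \ B) ∩ Ioi S] S) (𝓝 ϱp) ∧ g S = Hpz a ϱp := by
    intro S hSB hSJ
    obtain ⟨η, hη, hsubJ, hiso⟩ := hioo S hSB hSJ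
    haveI := hNBright S hSB hSJ
    obtain ⟨ϱp, hϱp, htd⟩ := hγ.rightLim S hSB
      ⟨η / 2, by positivity, fun s hs =>
        interior_subset (hsubJ ⟨by linarith [hs.1], by linarith [hs.2]⟩)⟩
    refine ⟨ϱp, hϱp, htd, ?_⟩
    simp only [hgdef]
    rw [htd.limUnder_eq]
  have hg0 : ∀ S ∈ B, S ∈ interior J → 0 < g S := by
    intro S h1 h2
    obtain ⟨ϱp, hp, _, he⟩ := hgspec S h1 h2
    rw [he]
    exact hp.2.2
  -- local bounds
  have hloc : ∀ i : (Set.Icc c e : Set ℝ), ∃ δ, 0 < δ ∧ ∃ C, ∀ F : Finset ℝ,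
      (∀ S ∈ F, S ∈ B ∧ S ∈ Ioo ((i : ℝ) - δ) ((i : ℝ) + δ)) → ∑ S ∈ F, g S ≤ C := by
    rintro ⟨t, ht⟩
    dsimp only
    have htJ : t ∈ interior J := hI ht
    by_cases htB : t ∈ B
    · obtain ⟨η, hη, hsubJ, hiso⟩ := hioo t htB htJ
      refine ⟨η, hη, g t, ?_⟩
      intro F hF
      have hsub : F ⊆ {t} := by
        intro S hS
        rw [Finset.mem_singleton]
        exact hiso S (hF S hS).1 (hF S hS).2
      calc ∑ S ∈ F, g S ≤ ∑ S ∈ ({t} : Finset ℝ), g S :=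
            Finset.sum_le_sum_of_subset_of_nonneg hsub (fun S hS _ => by
              rw [Finset.mem_singleton] at hS
              rw [hS]
              exact (hg0 t htB htJ).le)
        _ = g t := Finset.sum_singleton _ _
    · -- t ∉ B : main construction
      have htJB : t ∈ J \ B := ⟨interior_subset htJ, htB⟩
      have hxU : (γ t).2.1 ∈ U := hγU t htJB
      obtain ⟨ρ, hρ, hballρ⟩ := Metric.isOpen_iff.mp hU _ hxU
      set r := ρ / 2 with hrdef
      have hr : 0 < r := by positivity
      have hball : Metric.closedBall (γ t).2.1 r ⊆ U := fun x hx =>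
        hballρ (lt_of_le_of_lt (Metric.mem_closedBall.mp hx) (by rw [hrdef]; linarith))
      -- δ from continuity
      have hev : ∀ᶠ s in 𝓝[J \ B] t, (γ s).2.1 ∈ Metric.closedBall (γ t).2.1 r := by
        have hx : Tendsto (fun s => (γ s).2.1) (𝓝[J \ B] t) (𝓝 (γ t).2.1) :=
          (hproj.tendsto (γ t)).comp (hcontJB t htJB)
        exact hx (Metric.closedBall_mem_nhds _ hr)
      rw [eventually_nhdsWithin_iff] at hev
      obtain ⟨δ₁, hδ₁pos, hδ₁⟩ := Metric.eventually_nhds_iff.mp hev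
      obtain ⟨δ₂, hδ₂pos, hb2⟩ := Metric.isOpen_iff.mp isOpen_interior t htJ
      set δ := min δ₁ δ₂ with hδdef
      have hδpos : 0 < δ := lt_min hδ₁pos hδ₂pos
      have hWmem : ∀ s ∈ Ioo (t - δ) (t + δ), dist s t < δ := by
        intro s hs
        rw [Real.dist_eq]
        exact abs_sub_lt_iff.mpr ⟨by linarith [hs.2], by linarith [hs.1]⟩
      have hWJ : Ioo (t - δ) (t + δ) ⊆ interior J := fun s hs =>
        hb2 (by rw [Metric.mem_ball]; exact lt_of_lt_of_le (hWmem s hs) (min_le_right _ _))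
      -- the compact set K
      set K : Set (Phase d) := closure (γ '' (J \ B)) ∩
        ((fun ϱ : Phase d => ϱ.2.1) ⁻¹' Metric.closedBall (γ t).2.1 r) with hKdef
      have hKclosed : IsClosed K :=
        isClosed_closure.inter (Metric.isClosed_closedBall.preimage hproj)
      have hKc : IsCompact K :=
        hcpt.inter_right (Metric.isClosed_closedBall.preimage hproj)
      have hKV : K ⊆ V := fun ϱ hϱ => hball hϱ.2
      obtain ⟨R, hR⟩ := hKc.exists_bound_of_continuousOn (hHpzcont.mono hKV)
      obtain ⟨M, hM⟩ := hKc.exists_bound_of_continuousOn (hHp2zcont.mono hKV)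
      set M' := max M 0 with hM'def
      set R' := max R 0 with hR'def
      have hM'nn : (0 : ℝ) ≤ M' := le_max_right _ _
      have hR'nn : (0 : ℝ) ≤ R' := le_max_right _ _
      have hWK : ∀ s ∈ J \ B, s ∈ Ioo (t - δ) (t + δ) → γ s ∈ K := by
        intro s hs hw
        refine ⟨subset_closure ⟨s, hs, rfl⟩, ?_⟩
        exact hδ₁ (lt_of_lt_of_le (hWmem s hw) (min_le_left _ _)) hs
      have hgood : ∀ S ∈ B, S ∈ Ioo (t - δ) (t + δ) → ∃ ϱp, ϱp ∈ Hplus a ∧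
          Tendsto γ (𝓝[(J \ B) ∩ Ioi S] S) (𝓝 ϱp) ∧ g S = Hpz a ϱp ∧ ϱp ∈ K := by
        intro S hSB hSW
        obtain ⟨ϱp, h1, h2, h3⟩ := hgspec S hSB (hWJ hSW)
        refine ⟨ϱp, h1, h2, h3, ?_⟩
        haveI := hNBright S hSB (hWJ hSW)
        refine hKclosed.mem_of_tendsto h2 ?_
        have hWev : ∀ᶠ u in 𝓝[(J \ B) ∩ Ioi S] S, u ∈ Ioo (t - δ) (t + δ) :=
          nhdsWithin_le_nhds (isOpen_Ioo.mem_nhds hSW)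
        filter_upwards [eventually_mem_nhdsWithin, hWev] with u hu1 hu2
        exact hWK u hu1.1 hu2
      have hgR : ∀ S ∈ B, S ∈ Ioo (t - δ) (t + δ) → g S ≤ R' := by
        intro S h1 h2
        obtain ⟨ϱp, _, _, h3, h4⟩ := hgood S h1 h2
        rw [h3]
        calc Hpz a ϱp ≤ |Hpz a ϱp| := le_abs_self _
          _ = ‖Hpz a ϱp‖ := (Real.norm_eq_abs _).symm
          _ ≤ R := hR _ h4
          _ ≤ R' := le_max_left _ _
      -- the key estimate between consecutive reflections
      have hstar : ∀ S ∈ B, ∀ S' ∈ B, S ∈ Ioo (t - δ) (t + δ) → S' ∈ Ioo (t - δ) (t + δ) →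
          S < S' → g S ≤ M' * (S' - S) := by
        intro S hSB S' hS'B hSW hS'W hlt
        obtain ⟨ηS, hηS, hηSJ, hηSiso⟩ := hioo S hSB (hWJ hSW)
        obtain ⟨τ, hτS, hτS', hτno, hacc⟩ :
            ∃ τ, S < τ ∧ τ ≤ S' ∧ (∀ s ∈ Ioo S τ, s ∉ B) ∧
              (τ ∉ B → ∀ ε' > 0, ∃ b ∈ B, τ ≤ b ∧ b < τ + ε') := by
          by_cases hTne : (B ∩ Ioo S S').Nonempty
          · have hbdd : BddBelow (B ∩ Ioo S S') := ⟨S, fun b hb => (hb.2.1).le⟩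
            have hged : ∀ b ∈ B ∩ Ioo S S', S + min ηS (S' - S) ≤ b := by
              intro b hb
              rcases le_or_gt (S + ηS) b with h | h
              · linarith [min_le_left ηS (S' - S)]
              · exact absurd (hηSiso b hb.1 ⟨by linarith [hb.2.1], h⟩) (ne_of_gt hb.2.1)
            have hτge : S + min ηS (S' - S) ≤ sInf (B ∩ Ioo S S') := le_csInf hTne hged
            have hmin : 0 < min ηS (S' - S) := lt_min hηS (by linarith)
            have hτgt : S < sInf (B ∩ Ioo S S') := by linarith
            obtain ⟨b0, hb0⟩ := id hTne
            have hτle : sInf (B ∩ Ioo S S') ≤ S' :=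
              le_trans (csInf_le hbdd hb0) hb0.2.2.le
            refine ⟨sInf (B ∩ Ioo S S'), hτgt, hτle, ?_, ?_⟩
            · intro s hs hsB
              have h2 : sInf (B ∩ Ioo S S') ≤ s :=
                csInf_le hbdd ⟨hsB, hs.1, lt_of_lt_of_le hs.2 hτle⟩
              exact absurd h2 (not_le.mpr hs.2)
            · intro _ ε' hε'
              obtain ⟨b, hbT, hblt⟩ := exists_lt_of_csInf_lt hTne
                (by linarith : sInf (B ∩ Ioo S S') < sInf (B ∩ Ioo S S') + ε')
              exact ⟨b, hbT.1, csInf_le hbdd hbT, hblt⟩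
          · refine ⟨S', hlt, le_rfl, ?_, fun h => absurd hS'B h⟩
            intro s hs hsB
            exact hTne ⟨s, hsB, hs⟩
        have hτW : τ ∈ Ioo (t - δ) (t + δ) :=
          ⟨lt_trans hSW.1 hτS, lt_of_le_of_lt hτS' hS'W.2⟩
        have hIooW : Ioo S τ ⊆ Ioo (t - δ) (t + δ) := fun s hs =>
          ⟨lt_trans hSW.1 hs.1, lt_trans hs.2 hτW.2⟩
        have hIooJB : Ioo S τ ⊆ J \ B := fun s hs =>
          ⟨interior_subset (hWJ (hIooW hs)), hτno s hs⟩
        have hmemK : ∀ s ∈ Ioo S τ, γ s ∈ K := fun s hs =>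
          hWK s (hIooJB hs) (hIooW hs)
        have hHDA : ∀ s ∈ Ioo S τ,
            HasDerivAt γ (if γ s ∈ Gsg a then HpG a (γ s) else Hp a (γ s)) s := by
          intro s hs
          have hsJB := hIooJB hs
          have hnb : J \ B ∈ 𝓝 s := Filter.mem_of_superset (isOpen_Ioo.mem_nhds hs) hIooJB
          by_cases hG : γ s ∈ Gsg a
          · rw [if_pos hG]
            exact (hγ.derivHpG s hsJB hG).hasDerivAt hnb
          · rw [if_neg hG]
            exact (hγ.derivHp s hsJB hG).hasDerivAt hnb
        have hzderiv : ∀ s ∈ Ioo S τ, HasDerivAt (fun u => zc (γ u)) (Hpz a (γ s)) s := by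
          intro s hs
          have h1 := (Lz.hasFDerivAt (x := γ s)).comp_hasDerivAt s (hHDA s hs)
          by_cases hG : γ s ∈ Gsg a
          · rw [if_pos hG] at h1
            rw [hLzHpG] at h1
            exact h1
          · rw [if_neg hG] at h1
            rw [hLzHp] at h1
            exact h1
        have hφd : ∀ s ∈ Ioo S τ, HasDerivAt (fun u => Hpz a (γ u))
            (if γ s ∈ Gsg a then 0 else Hp2z a (γ s)) s := by
          intro s hs
          have hVs : γ s ∈ V := hKV (hmemK s hs)
          have h1 := (hHpzdiff _ hVs).comp_hasDerivAt s (hHDA s hs)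
          by_cases hG : γ s ∈ Gsg a
          · rw [if_pos hG] at h1 ⊢
            have hz0 : (γ s).2.1 (Fin.last d) = 0 := hG.1.1
            have hadd : a (γ s).2.1 (Fin.last d) (Fin.last d) = 1 := (hqn _ hVs hz0).2
            have hval : fderiv ℝ (Hpz a) (γ s) (HpG a (γ s)) = 0 := by
              simp only [HpG, map_sub, _root_.map_smul, heζ _ hVs, hadd]
              rw [show fderiv ℝ (Hpz a) (γ s) (Hp a (γ s)) = Hp2z a (γ s) from rfl]
              rw [smul_eq_mul]
              ring
            rw [hval] at h1
            exact h1
          · rw [if_neg hG] at h1 ⊢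
            exact h1
        have hφbound : ∀ u ∈ Ioo S τ,
            |if γ u ∈ Gsg a then (0 : ℝ) else Hp2z a (γ u)| ≤ M' := by
          intro u hu
          by_cases hG : γ u ∈ Gsg a
          · rw [if_pos hG, abs_zero]
            exact hM'nn
          · rw [if_neg hG]
            calc |Hp2z a (γ u)| = ‖Hp2z a (γ u)‖ := (Real.norm_eq_abs _).symm
              _ ≤ M := hM _ (hmemK u hu)
              _ ≤ M' := le_max_left _ _
        -- the limit data at S
        obtain ⟨ϱp, hϱpH, htd, hgeq, hϱpK⟩ := hgood S hSB hSW
        -- limit of zc∘γ at τ from the left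
        have hzlim : Tendsto (fun u => zc (γ u)) (𝓝[Ioo S τ] τ) (𝓝 0) := by
          by_cases hτB : τ ∈ B
          · have hτIcc : ∃ ε > 0, Icc (τ - ε) τ ⊆ J := by
              obtain ⟨η, hη, hsubJ, _⟩ := hioo τ hτB (hWJ hτW)
              exact ⟨η / 2, by positivity, fun u hu =>
                interior_subset (hsubJ ⟨by linarith [hu.1], by linarith [hu.2]⟩)⟩
            obtain ⟨ϱm, hϱm, htdm⟩ := hγ.leftLim τ hτB hτIcc
            have h1 := (hzccont.tendsto ϱm).comp
              (htdm.mono_left (nhdsWithin_mono _ (fun u hu => ⟨hIooJB hu, hu.2⟩)))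
            rw [hϱm.1] at h1
            exact h1
          · have hτJB : τ ∈ J \ B := ⟨interior_subset (hWJ hτW), hτB⟩
            have hzcτ : zc (γ τ) = 0 := by
              by_contra hne
              have hεpos : 0 < |zc (γ τ)| / 3 := by
                have := abs_pos.mpr hne
                linarith
              have hct : Tendsto (fun u => zc (γ u)) (𝓝[J \ B] τ) (𝓝 (zc (γ τ))) :=
                (hzccont.tendsto (γ τ)).comp (hcontJB τ hτJB)
              rw [Metric.tendsto_nhdsWithin_nhds] at hct
              obtain ⟨δ₃, hδ₃pos, hδ₃⟩ := hct _ hεpos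
              set δ₄ := min δ₃ (t + δ - τ) with hδ₄def
              have hδ₄pos : 0 < δ₄ := lt_min hδ₃pos (by linarith [hτW.2])
              obtain ⟨b, hbB, hbge, hblt⟩ := hacc hτB (δ₄ / 2) (by positivity)
              have hbW : b ∈ Ioo (t - δ) (t + δ) :=
                ⟨by linarith [hτW.1], by linarith [min_le_right δ₃ (t + δ - τ), hτW.2]⟩
              obtain ⟨ϱb, hϱb, htdb, _, _⟩ := hgood b hbB hbW
              haveI := hNBright b hbB (hWJ hbW)
              have hev1 : ∀ᶠ u in 𝓝[(J \ B) ∩ Ioi b] b, |zc (γ u)| < |zc (γ τ)| / 3 := by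
                have h1 := (hzccont.tendsto ϱb).comp htdb
                rw [hϱb.1] at h1
                have h2 := Metric.tendsto_nhds.mp h1 _ hεpos
                simpa [Real.dist_eq] using h2
              have hev2 : ∀ᶠ u in 𝓝[(J \ B) ∩ Ioi b] b, u < τ + δ₄ := by
                have h1 : Iio (τ + δ₄) ∈ 𝓝 b := Iio_mem_nhds (by
                  have := min_le_left δ₃ (t + δ - τ)
                  linarith)
                exact nhdsWithin_le_nhds h1
              obtain ⟨u, ⟨⟨hu1, hu2⟩, hu3⟩⟩ :=
                ((eventually_mem_nhdsWithin.and hev1).and hev2).exists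
              have hdist : dist u τ < δ₃ := by
                rw [Real.dist_eq]
                refine abs_sub_lt_iff.mpr ⟨?_, ?_⟩
                · have := min_le_left δ₃ (t + δ - τ)
                  linarith
                · have h2 : b < u := hu1.2
                  linarith
              have h3 := hδ₃ hu1.1 hdist
              rw [Real.dist_eq] at h3
              have habs := abs_sub_abs_le_abs_sub (zc (γ τ)) (zc (γ u))
              rw [abs_sub_comm] at h3
              have h0 : 0 < |zc (γ τ)| := abs_pos.mpr hne
              linarith
            have h1 := (hzccont.tendsto (γ τ)).comp
              ((hcontJB τ hτJB).mono_left (nhdsWithin_mono _ hIooJB))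
            rw [hzcτ] at h1
            exact h1
        -- find a point where Hpz ∘ γ ≤ 0
        obtain ⟨ξ, hξI, hξle⟩ : ∃ ξ ∈ Ioo S τ, Hpz a (γ ξ) ≤ 0 := by
          by_contra hcon
          push_neg at hcon
          have hmono : StrictMonoOn (fun u => zc (γ u)) (Ioo S τ) := by
            apply strictMonoOn_of_deriv_pos (convex_Ioo _ _)
            · exact fun u hu => (hzderiv u hu).continuousAt.continuousWithinAt
            · intro u hu
              rw [interior_Ioo] at hu
              rw [(hzderiv u hu).deriv]
              exact hcon u hu
          obtain ⟨s₀, hs₀⟩ := exists_between hτS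
          obtain ⟨s₁, hs₁⟩ := exists_between hs₀.2
          have hs₀m : s₀ ∈ Ioo S τ := ⟨hs₀.1, lt_trans hs₁.1 hs₁.2⟩
          have hs₁m : s₁ ∈ Ioo S τ := ⟨lt_trans hs₀.1 hs₁.1, hs₁.2⟩
          haveI := (hNB2 S s₀ hs₀.1 _ (subset_refl _)).1
          have hl1 : Tendsto (fun u => zc (γ u)) (𝓝[Ioo S s₀] S) (𝓝 0) := by
            have hsub : Ioo S s₀ ⊆ (J \ B) ∩ Ioi S := fun u hu =>
              ⟨hIooJB ⟨hu.1, lt_trans hu.2 hs₀m.2⟩, hu.1⟩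
            have h1 := (hzccont.tendsto ϱp).comp
              (htd.mono_left (nhdsWithin_mono _ hsub))
            rw [hϱpH.1] at h1
            exact h1
          have h0le : 0 ≤ zc (γ s₀) := by
            apply le_of_tendsto hl1
            apply eventually_nhdsWithin_of_forall
            intro u hu
            exact (hmono ⟨hu.1, lt_trans hu.2 hs₀m.2⟩ hs₀m hu.2).le
          haveI := (hNB2 s₁ τ hs₁m.2 _ (subset_refl _)).2
          have hl2 : Tendsto (fun u => zc (γ u)) (𝓝[Ioo s₁ τ] τ) (𝓝 0) :=
            hzlim.mono_left (nhdsWithin_mono _ (fun u hu => ⟨lt_trans hs₁m.1 hu.1, hu.2⟩))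
          have h1le : zc (γ s₁) ≤ 0 := by
            apply ge_of_tendsto hl2
            apply eventually_nhdsWithin_of_forall
            intro u hu
            exact (hmono hs₁m ⟨lt_trans hs₁m.1 hu.1, hu.2⟩ hu.1).le
          have := hmono hs₀m hs₁m hs₁.1
          linarith
        -- Hpz ∘ γ ≤ M' * (τ - S) on (S, ξ)
        have hkey : ∀ s ∈ Ioo S ξ, Hpz a (γ s) ≤ M' * (τ - S) := by
          intro s hs
          have hsξ : s < ξ := hs.2
          have hsτ : s ∈ Ioo S τ := ⟨hs.1, lt_trans hs.2 hξI.2⟩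
          have hIcc : Icc s ξ ⊆ Ioo S τ := fun u hu =>
            ⟨lt_of_lt_of_le hs.1 hu.1, lt_of_le_of_lt hu.2 hξI.2⟩
          have hψ : ∀ u ∈ Icc s ξ, HasDerivAt (fun w => Hpz a (γ w) + M' * w)
              ((if γ u ∈ Gsg a then 0 else Hp2z a (γ u)) + M') u := by
            intro u hu
            exact (hφd u (hIcc hu)).add
              ((by simpa using (hasDerivAt_id u).const_mul M' :
                HasDerivAt (fun w : ℝ => M' * w) M' u))
          have hmono2 : MonotoneOn (fun w => Hpz a (γ w) + M' * w) (Icc s ξ) := by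
            apply monotoneOn_of_deriv_nonneg (convex_Icc _ _)
            · exact fun u hu => (hψ u hu).continuousAt.continuousWithinAt
            · intro u hu
              rw [interior_Icc] at hu
              exact (hψ u (Ioo_subset_Icc_self hu)).differentiableAt.differentiableWithinAt
            · intro u hu
              rw [interior_Icc] at hu
              rw [(hψ u (Ioo_subset_Icc_self hu)).deriv]
              have := (abs_le.mp (hφbound u (hIcc (Ioo_subset_Icc_self hu)))).1
              linarith
          have h1 := hmono2 (left_mem_Icc.mpr hsξ.le) (right_mem_Icc.mpr hsξ.le) hsξ.le
          simp only at h1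
          have hd1 : ξ - s ≤ τ - S := by
            have := hs.1
            have := hξI.2
            linarith
          have h2 : M' * (ξ - s) ≤ M' * (τ - S) := mul_le_mul_of_nonneg_left hd1 hM'nn
          nlinarith [h1, hξle]
        -- pass to the limit s → S⁺
        haveI : (𝓝[Ioo S ξ] S).NeBot := (hNB2 S ξ hξI.1 _ (subset_refl _)).1
        have htd2 : Tendsto (fun u => Hpz a (γ u)) (𝓝[Ioo S ξ] S) (𝓝 (Hpz a ϱp)) := by
          have hca : ContinuousAt (Hpz a) ϱp :=
            hHpzcont.continuousAt (hVo.mem_nhds (hKV hϱpK))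
          exact hca.tendsto.comp (htd.mono_left (nhdsWithin_mono _
            (fun u hu => ⟨hIooJB ⟨hu.1, lt_trans hu.2 hξI.2⟩, hu.1⟩)))
        have hfin := le_of_tendsto htd2 (eventually_nhdsWithin_of_forall hkey)
        rw [hgeq]
        calc Hpz a ϱp ≤ M' * (τ - S) := hfin
          _ ≤ M' * (S' - S) := mul_le_mul_of_nonneg_left (by linarith) hM'nn
      -- induction on finite sets of reflection times in the window
      have hind : ∀ n : ℕ, ∀ F : Finset ℝ, F.card = n →
          (∀ S ∈ F, S ∈ B ∧ S ∈ Ioo (t - δ) (t + δ)) → ∀ hne : F.Nonempty,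
          ∑ S ∈ F, g S ≤ M' * (F.max' hne - F.min' hne) + R' := by
        intro n
        induction n with
        | zero =>
          intro F hc hF hne
          rw [Finset.card_eq_zero] at hc
          subst hc
          exact absurd hne Finset.not_nonempty_empty
        | succ n ih =>
          intro F hc hF hne
          have hmF : F.min' hne ∈ F := F.min'_mem hne
          by_cases hne' : (F.erase (F.min' hne)).Nonempty
          · set m := F.min' hne with hmdef
            set m' := (F.erase m).min' hne' with hm'def
            have hm'F : m' ∈ F.erase m := Finset.min'_mem _ _
            have hm'F2 : m' ∈ F := Finset.mem_of_mem_erase hm'F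
            have hlt2 : m < m' :=
              lt_of_le_of_ne (F.min'_le _ hm'F2) (Ne.symm (Finset.ne_of_mem_erase hm'F))
            have hstar2 := hstar m (hF _ hmF).1 m' (hF _ hm'F2).1
              (hF _ hmF).2 (hF _ hm'F2).2 hlt2
            have hih := ih (F.erase m) (by simp [Finset.card_erase_of_mem hmF, hc])
              (fun S hS => hF S (Finset.mem_of_mem_erase hS)) hne'
            have hmax'le : (F.erase m).max' hne' ≤ F.max' hne :=
              Finset.max'_subset hne' (Finset.erase_subset _ _)
            have hih2 : ∑ S ∈ F.erase m, g S ≤ M' * (F.max' hne - m') + R' := by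
              refine le_trans hih (add_le_add_left ?_ R')
              exact mul_le_mul_of_nonneg_left (by linarith) hM'nn
            have hsum : ∑ S ∈ F.erase m, g S + g m = ∑ S ∈ F, g S :=
              Finset.sum_erase_add F _ hmF
            have h3 := add_le_add hstar2 hih2
            calc ∑ S ∈ F, g S = g m + ∑ S ∈ F.erase m, g S := by rw [← hsum]; ring
              _ ≤ M' * (m' - m) + (M' * (F.max' hne - m') + R') := h3
              _ = M' * (F.max' hne - m) + R' := by ring
          · have huniq : ∀ S ∈ F, S = F.min' hne := by
              intro S hS
              by_contra hSm
              exact hne' ⟨S, Finset.mem_erase.mpr ⟨hSm, hS⟩⟩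
            have hsum : ∑ S ∈ F, g S = g (F.min' hne) :=
              Finset.sum_eq_single_of_mem (F.min' hne) hmF
                (fun b hb hbne => absurd (huniq b hb) hbne)
            rw [hsum]
            have h1 := hgR _ (hF _ hmF).1 (hF _ hmF).2
            have h2 : F.min' hne ≤ F.max' hne := F.min'_le _ (F.max'_mem hne)
            nlinarith [mul_nonneg hM'nn (sub_nonneg.mpr h2)]
      refine ⟨δ, hδpos, M' * (2 * δ) + R', ?_⟩
      intro F hF
      rcases F.eq_empty_or_nonempty with rfl | hne
      · simp only [Finset.sum_empty]
        have : 0 ≤ M' * (2 * δ) := mul_nonneg hM'nn (by linarith)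
        linarith
      · have hmax := (hF _ (F.max'_mem hne)).2
        have hmin := (hF _ (F.min'_mem hne)).2
        have hdle : F.max' hne - F.min' hne ≤ 2 * δ := by
          have h1 := hmax.2
          have h2 := hmin.1
          linarith
        calc ∑ S ∈ F, g S ≤ M' * (F.max' hne - F.min' hne) + R' := hind _ F rfl hF hne
          _ ≤ M' * (2 * δ) + R' :=
            add_le_add_left (mul_le_mul_of_nonneg_left hdle hM'nn) R'
  -- global bound via compactness
  choose δf hδf Cf hCf using hloc
  have hcov : Set.Icc c e ⊆
      ⋃ i : (Set.Icc c e : Set ℝ), Ioo ((i : ℝ) - δf i) ((i : ℝ) + δf i) := by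
    intro x hx
    refine Set.mem_iUnion.mpr ⟨⟨x, hx⟩, ?_⟩
    have := hδf ⟨x, hx⟩
    exact Set.mem_Ioo.mpr ⟨by linarith, by linarith⟩
  obtain ⟨T, hTcov⟩ := isCompact_Icc.elim_finite_subcover
    (fun i : (Set.Icc c e : Set ℝ) => Ioo ((i : ℝ) - δf i) ((i : ℝ) + δf i))
    (fun i => isOpen_Ioo) hcov
  have hbound : ∀ F : Finset ℝ, (∀ S ∈ F, S ∈ B ∩ Set.Icc c e) →
      ∑ S ∈ F, g S ≤ ∑ i ∈ T, max (Cf i) 0 := by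
    intro F hF
    have h1 : ∀ S ∈ F, g S ≤ ∑ i ∈ T,
        (if S ∈ Ioo ((i : ℝ) - δf i) ((i : ℝ) + δf i) then g S else 0) := by
      intro S hS
      obtain ⟨i, hiT, hiW⟩ : ∃ i ∈ T, S ∈ Ioo ((i : ℝ) - δf i) ((i : ℝ) + δf i) := by
        have h0 := hTcov (hF S hS).2
        rw [Set.mem_iUnion₂] at h0
        obtain ⟨i, hiT, hiW⟩ := h0
        exact ⟨i, hiT, hiW⟩
      have h2 := Finset.single_le_sum
        (f := fun i : (Set.Icc c e : Set ℝ) =>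
          if S ∈ Ioo ((i : ℝ) - δf i) ((i : ℝ) + δf i) then g S else 0)
        (fun j _ => by
          show (0 : ℝ) ≤ if S ∈ Ioo ((j : ℝ) - δf j) ((j : ℝ) + δf j) then g S else 0
          by_cases hj : S ∈ Ioo ((j : ℝ) - δf j) ((j : ℝ) + δf j)
          · rw [if_pos hj]
            exact (hg0 S (hF S hS).1 (hI (hF S hS).2)).le
          · rw [if_neg hj]) hiT
      have h3 : (if S ∈ Ioo ((i : ℝ) - δf i) ((i : ℝ) + δf i) then g S else 0) ≤
          ∑ i ∈ T, (if S ∈ Ioo ((i : ℝ) - δf i) ((i : ℝ) + δf i) then g S else 0) := h2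
      rwa [if_pos hiW] at h3
    calc ∑ S ∈ F, g S ≤ ∑ S ∈ F, ∑ i ∈ T,
          (if S ∈ Ioo ((i : ℝ) - δf i) ((i : ℝ) + δf i) then g S else 0) :=
          Finset.sum_le_sum h1
      _ = ∑ i ∈ T, ∑ S ∈ F,
          (if S ∈ Ioo ((i : ℝ) - δf i) ((i : ℝ) + δf i) then g S else 0) := Finset.sum_comm
      _ ≤ ∑ i ∈ T, max (Cf i) 0 := by
        apply Finset.sum_le_sum
        intro i _
        rw [← Finset.sum_filter]
        refine le_trans (hCf i _ ?_) (le_max_left _ _)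
        intro S hS
        rw [Finset.mem_filter] at hS
        exact ⟨(hF S hS.1).1, hS.2⟩
  refine ⟨g, fun S hS => hgspec S hS.1 (hI hS.2), ?_⟩
  apply summable_of_sum_le (c := ∑ i ∈ T, max (Cf i) 0)
  · intro x
    exact (hg0 x.1 x.2.1 (hI x.2.2)).le
  · intro u
    have himg : ∀ S ∈ u.image (Subtype.val), S ∈ B ∩ Set.Icc c e := by
      intro S hS
      obtain ⟨x, _, rfl⟩ := Finset.mem_image.mp hS
      exact x.2
    calc ∑ x ∈ u, g ↑x = ∑ S ∈ u.image Subtype.val, g S :=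
          (Finset.sum_image (fun x _ y _ h => Subtype.ext h)).symm
      _ ≤ ∑ i ∈ T, max (Cf i) 0 := hbound _ himg
end
end
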